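/- arXiv:1803.03008 — 4 statements merged into one kernel-verified Lean document; each statement's English description precedes it below -/
import Mathlib

section
/- Let X, Y ⊂ H(𝔻) be Banach spaces containing the constants and satisfying condition (I). If T: X → Y is bounded and the restriction of T to the closed unit ball B_X is continuous from the compact-open topology to the compact-open topology, then Φ_Y ∘ T ∘ Φ_X^{-1}: (*X)* → (*Y)* is weak*-to-weak* continuous, and consequently there exists a bounded operator S: *Y → *X such that T = Φ_Y^{-1} ∘ S* ∘ Φ_X. -/
noncomputable section

open Complex MeasureTheory Metric Set Filter Topology

/-- The open unit disc in `ℂ`. -/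
def uDisc : Set ℂ := Metric.ball 0 1

/-- Functions on the disc carrying the topology of uniform convergence on compact
subsets of the disc (i.e. the compact-open topology on holomorphic functions). -/
abbrev CO : Type := UniformOnFun (↥uDisc) ℂ {K : Set (↥uDisc) | IsCompact K}

/-- The canonical map sending a function on `ℂ` to its restriction to the disc,
viewed in the compact-open topology. -/
def toCO (f : ℂ → ℂ) : CO :=
  UniformOnFun.ofFun {K : Set (↥uDisc) | IsCompact K} (fun z => f z.1)

/-- The compact-open topology induced on an abstract space of analytic functions
via the inclusion `ι`. -/
def coTopOn {E : Type} (ι : E → (ℂ → ℂ)) : TopologicalSpace E :=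
  TopologicalSpace.induced (fun x => toCO (ι x)) inferInstance

/-- Condition (I): the closed unit ball is compact in the compact-open topology. -/
def CondI {E : Type} [NormedAddCommGroup E] (ι : E → (ℂ → ℂ)) : Prop :=
  IsCompact ((fun x => toCO (ι x)) '' Metric.closedBall (0 : E) 1)

/-- The norm of the evaluation functional `δ_z` on the space realized via `ι`. -/
def evalNorm {E : Type} [NormedAddCommGroup E] (ι : E → (ℂ → ℂ)) (z : ℂ) : ℝ :=
  sSup ((fun x => ‖ι x z‖) '' Metric.closedBall (0 : E) 1)

/-- Condition (II): the norms of the evaluation functionals blow up at the boundary. -/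
def CondII {E : Type} [NormedAddCommGroup E] (ι : E → (ℂ → ℂ)) : Prop :=
  ∀ M : ℝ, ∃ s : ℝ, 0 ≤ s ∧ s < 1 ∧ ∀ z ∈ uDisc, s < ‖z‖ → M < evalNorm ι z

/-- The dilation `f_r(z) = f (r z)`. -/
def dil (r : ℝ) (f : ℂ → ℂ) : ℂ → ℂ := fun z => f ((r : ℂ) * z)

/-- Condition (III): the dilation operators `T_r` act compactly on the space. -/
def CondIII {E : Type} [NormedAddCommGroup E] [NormedSpace ℂ E] (ι : E →ₗ[ℂ] (ℂ → ℂ)) : Prop :=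
  ∀ r : ℝ, 0 < r → r < 1 → ∃ T : E →L[ℂ] E,
    (∀ x : E, Set.EqOn (ι (T x)) (dil r (ι x)) uDisc) ∧ IsCompactOperator (fun x : E => T x)

/-- Condition (IV): the dilation operators `T_r` are uniformly bounded on the space. -/
def CondIV {E : Type} [NormedAddCommGroup E] [NormedSpace ℂ E] (ι : E →ₗ[ℂ] (ℂ → ℂ)) : Prop :=
  ∃ M : ℝ, ∀ r : ℝ, 0 < r → r < 1 → ∃ T : E →L[ℂ] E,
    (∀ x : E, Set.EqOn (ι (T x)) (dil r (ι x)) uDisc) ∧ ‖T‖ ≤ M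

/-- Condition (V): multiplication by a bounded analytic function `u` is bounded on the
space, with norm controlled by `‖u‖_∞`. -/
def CondV {E : Type} [NormedAddCommGroup E] [NormedSpace ℂ E] (ι : E →ₗ[ℂ] (ℂ → ℂ)) : Prop :=
  ∃ C : ℝ, 0 < C ∧ ∀ (u : ℂ → ℂ) (b : ℝ), DifferentiableOn ℂ u uDisc →
    (∀ z ∈ uDisc, ‖u z‖ ≤ b) →
    ∃ T : E →L[ℂ] E,
      (∀ x : E, Set.EqOn (ι (T x)) (fun z => u z * ι x z) uDisc) ∧ ‖T‖ ≤ C * b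

/-- The set of values `v(z)|f(z)|`, `z ∈ 𝔻`. -/
def hvSet (v : ℂ → ℝ) (f : ℂ → ℂ) : Set ℝ := (fun z => v z * ‖f z‖) '' uDisc

/-- The norm of the weighted Banach space `H_v^∞`. -/
def hvNorm (v : ℂ → ℝ) (f : ℂ → ℂ) : ℝ := sSup (hvSet v f)

/-- Membership in the weighted Banach space `H_v^∞`. -/
def memHvInf (v : ℂ → ℝ) (f : ℂ → ℂ) : Prop :=
  DifferentiableOn ℂ f uDisc ∧ BddAbove (hvSet v f)

/-- `F(z) → 0` as `|z| → 1⁻`. -/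
def vanishBd (F : ℂ → ℝ) : Prop :=
  ∀ ε : ℝ, 0 < ε → ∃ s : ℝ, 0 ≤ s ∧ s < 1 ∧ ∀ z ∈ uDisc, s < ‖z‖ → F z < ε

/-- Membership in the space `H_v^0`. -/
def memHv0 (v : ℂ → ℝ) (f : ℂ → ℂ) : Prop :=
  memHvInf v f ∧ vanishBd (fun z => v z * ‖f z‖)

/-- The set of values `v(z)|f'(z)|`, `z ∈ 𝔻`. -/
def bvSet (v : ℂ → ℝ) (f : ℂ → ℂ) : Set ℝ := (fun z => v z * ‖deriv f z‖) '' uDisc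

/-- The norm of the Bloch-type space `B_v^∞`. -/
def bvNorm (v : ℂ → ℝ) (f : ℂ → ℂ) : ℝ := ‖f 0‖ + sSup (bvSet v f)

/-- Membership in the Bloch-type space `B_v^∞`. -/
def memBvInf (v : ℂ → ℝ) (f : ℂ → ℂ) : Prop :=
  DifferentiableOn ℂ f uDisc ∧ BddAbove (bvSet v f)

/-- Membership in the little Bloch-type space `B_v^0`. -/
def memBv0 (v : ℂ → ℝ) (f : ℂ → ℂ) : Prop :=
  memBvInf v f ∧ vanishBd (fun z => v z * ‖deriv f z‖)

/-- A weight: continuous, strictly positive on `𝔻`, vanishing at the boundary. -/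
def IsWeight (v : ℂ → ℝ) : Prop :=
  ContinuousOn v uDisc ∧ (∀ z ∈ uDisc, 0 < v z) ∧ vanishBd v

/-- A normal weight. -/
def IsNormalWeight (v : ℂ → ℝ) : Prop :=
  IsWeight v ∧ (∀ z ∈ uDisc, v z = v ((‖z‖ : ℝ) : ℂ)) ∧
  (∀ r s : ℝ, 0 ≤ r → r ≤ s → s < 1 → v ((s : ℂ)) ≤ v ((r : ℂ))) ∧
  (∃ k : ℕ, 1 ≤ k ∧
    Filter.limsup (fun n : ℕ =>
        v ((((1 : ℝ) - (2 : ℝ) ^ (-(n : ℤ) - (k : ℤ)) : ℝ) : ℂ)) /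
        v ((((1 : ℝ) - (2 : ℝ) ^ (-(n : ℤ)) : ℝ) : ℂ))) Filter.atTop < 1) ∧
  (∃ M : ℝ, ∀ n : ℕ,
    v ((((1 : ℝ) - (2 : ℝ) ^ (-(n : ℤ)) : ℝ) : ℂ)) /
    v ((((1 : ℝ) - (2 : ℝ) ^ (-(n : ℤ) - 1) : ℝ) : ℂ)) ≤ M)

/-- The standard weight `v_α(z) = (1 - |z|²)^α`. -/
def stdWeight (α : ℝ) : ℂ → ℝ := fun z => (1 - ‖z‖ ^ 2) ^ α

/-- The classical Volterra operator `T_g f (w) = ∫₀^w f(ξ) g'(ξ) dξ`. -/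
def volterra (g f : ℂ → ℂ) (w : ℂ) : ℂ :=
  w * ∫ t in (0:ℝ)..1, f ((t : ℂ) * w) * deriv g ((t : ℂ) * w)

/-- The generalized Volterra operator `T_g^φ f (z) = ∫₀^{φ(z)} f(ξ) g'(ξ) dξ`. -/
def genVolterra (g φ f : ℂ → ℂ) : ℂ → ℂ := fun z => volterra g f (φ z)

/-- An analytic selfmap of the unit disc. -/
def IsSelfMap (φ : ℂ → ℂ) : Prop :=
  DifferentiableOn ℂ φ uDisc ∧ Set.MapsTo φ uDisc uDisc

/-- `E`, embedded in `H(𝔻)` by `ι`, is (isometrically) the Banach space of analytic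
functions with membership predicate `mem` and norm `nrm`. -/
def RealizesSpace {E : Type} [NormedAddCommGroup E] [NormedSpace ℂ E]
    (ι : E →ₗ[ℂ] (ℂ → ℂ)) (mem : (ℂ → ℂ) → Prop) (nrm : (ℂ → ℂ) → ℝ) : Prop :=
  (∀ x y : E, Set.EqOn (ι x) (ι y) uDisc → x = y) ∧
  (∀ x : E, mem (ι x)) ∧
  (∀ f : ℂ → ℂ, mem f → ∃ x : E, Set.EqOn (ι x) f uDisc) ∧
  (∀ x : E, ‖x‖ = nrm (ι x))

/-- The weak topology of a normed space. -/
def wkTop (Y : Type) [NormedAddCommGroup Y] [NormedSpace ℂ Y] : TopologicalSpace Y :=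
  TopologicalSpace.induced (fun y : Y => (fun ℓ : Y →L[ℂ] ℂ => ℓ y)) Pi.topologicalSpace

/-- A map between normed spaces is weakly compact if the image of the closed unit ball
is relatively compact in the weak topology. -/
def WeaklyCompactOn {X Y : Type} [NormedAddCommGroup X] [NormedAddCommGroup Y]
    [NormedSpace ℂ Y] (T : X → Y) : Prop :=
  @IsCompact Y (wkTop Y) (@closure Y (wkTop Y) (T '' Metric.closedBall (0 : X) 1))

/-- The essential norm of a bounded operator: the distance to the compact operators. -/
def essNorm {X Y : Type} [NormedAddCommGroup X] [NormedSpace ℂ X]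
    [NormedAddCommGroup Y] [NormedSpace ℂ Y] (T : X →L[ℂ] Y) : ℝ :=
  sInf {c : ℝ | ∃ K : X →L[ℂ] Y, IsCompactOperator (fun x : X => K x) ∧ c = ‖T - K‖}

/-- `limsup_{|φ(z)| → 1} F(z)` (with the convention that it is `0` when `sup |φ| < 1`). -/
def limsupAtBd (φ : ℂ → ℂ) (F : ℂ → ℝ) : ℝ :=
  sInf {M : ℝ | ∃ s : ℝ, 0 ≤ s ∧ s < 1 ∧ ∀ z ∈ uDisc, s < ‖φ z‖ → F z ≤ M}

/-- The set of integral means defining the Hardy norm. -/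
def hpSet (p : ℝ) (f : ℂ → ℂ) : Set ℝ :=
  (fun r : ℝ => (2 * Real.pi)⁻¹ *
      ∫ θ in (0:ℝ)..(2 * Real.pi),
        ‖f ((r : ℂ) * Complex.exp ((θ : ℂ) * Complex.I))‖ ^ p) '' Set.Ico (0:ℝ) 1

/-- The Hardy space norm. -/
def hpNorm (p : ℝ) (f : ℂ → ℂ) : ℝ := sSup (hpSet p f) ^ (1 / p)

/-- Membership in the Hardy space `H^p`. -/
def memHp (p : ℝ) (f : ℂ → ℂ) : Prop :=
  DifferentiableOn ℂ f uDisc ∧ BddAbove (hpSet p f)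

/-- The Bergman integrand `|f(z)|^p (1-|z|²)^α`. -/
def bergFun (p α : ℝ) (f : ℂ → ℂ) : ℂ → ℝ :=
  fun z => ‖f z‖ ^ p * (1 - ‖z‖ ^ 2) ^ α

/-- The weighted Bergman space norm (with respect to normalized area measure). -/
def bergNorm (p α : ℝ) (f : ℂ → ℂ) : ℝ :=
  (Real.pi⁻¹ * ∫ z in uDisc, bergFun p α f z) ^ (1 / p)

/-- Membership in the weighted Bergman space `A_α^p`. -/
def memBerg (p α : ℝ) (f : ℂ → ℂ) : Prop :=
  DifferentiableOn ℂ f uDisc ∧ MeasureTheory.IntegrableOn (bergFun p α f) uDisc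

/-- The associated weight `ṽ` of a weight `v`. -/
def assocWeight (v : ℂ → ℝ) (z : ℂ) : ℝ :=
  (sSup ((fun f : ℂ → ℂ => ‖f z‖) ''
    {f : ℂ → ℂ | DifferentiableOn ℂ f uDisc ∧ ∀ w ∈ uDisc, v w * ‖f w‖ ≤ 1}))⁻¹

/-- The space `H(𝔻)` of holomorphic functions on the disc, with the compact-open
topology. -/
def HolD : Type := {f : ℂ → ℂ // DifferentiableOn ℂ f uDisc}

instance : TopologicalSpace HolD :=
  TopologicalSpace.induced (fun f : HolD => toCO f.1) inferInstance

instance : Fact ((1 : ENNReal) ≤ ⊤) := ⟨le_top⟩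

/-- The sequence space `ℓ^∞`. -/
abbrev ellInf : Type := lp (fun _ : ℕ => ℂ) ⊤

/-- The Dixmier–Ng predual `*X`: functionals whose restriction to the closed unit ball
is continuous for the compact-open topology. -/
def preD {X : Type} [NormedAddCommGroup X] [NormedSpace ℂ X] (ι : X → (ℂ → ℂ)) :
    Submodule ℂ (X →L[ℂ] ℂ) where
  carrier := {ℓ : X →L[ℂ] ℂ |
    @ContinuousOn X ℂ (coTopOn ι) _ (fun x => ℓ x) (Metric.closedBall (0 : X) 1)}
  add_mem' := by
    intro a b ha hb
    letI : TopologicalSpace X := coTopOn ι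
    simp only [Set.mem_setOf_eq, ContinuousLinearMap.add_apply] at *
    exact ha.add hb
  zero_mem' := by
    letI : TopologicalSpace X := coTopOn ι
    simp only [Set.mem_setOf_eq, ContinuousLinearMap.zero_apply]
    exact continuousOn_const
  smul_mem' := by
    intro c a ha
    letI : TopologicalSpace X := coTopOn ι
    simp only [Set.mem_setOf_eq, ContinuousLinearMap.smul_apply] at *
    exact ha.const_smul c

lemma comp_mem_preD {X Y : Type} [NormedAddCommGroup X] [NormedSpace ℂ X]
    [NormedAddCommGroup Y] [NormedSpace ℂ Y]
    (ιX : X →ₗ[ℂ] (ℂ → ℂ)) (ιY : Y →ₗ[ℂ] (ℂ → ℂ))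
    (T : X →L[ℂ] Y)
    (hTco : @ContinuousOn X CO (coTopOn (fun x : X => ιX x)) _
      (fun x => toCO (ιY (T x))) (Metric.closedBall (0 : X) 1))
    (u : Y →L[ℂ] ℂ) (hu : u ∈ preD (fun y : Y => ιY y)) :
    u.comp T ∈ preD (fun x : X => ιX x) := by
  letI tX : TopologicalSpace X := coTopOn (fun x : X => ιX x)
  letI tY : TopologicalSpace Y := coTopOn (fun y : Y => ιY y)
  set c : ℝ := ‖T‖ + 1 with hc
  have hc0 : 0 < c := by positivity
  set a : ℂ := ((c⁻¹ : ℝ) : ℂ) with ha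
  set g : X → Y := fun x => a • T x with hg
  -- postcomposition with multiplication by `a` is continuous on CO
  have hmul : Continuous (UniformOnFun.ofFun {K : Set (↥uDisc) | IsCompact K} ∘
      ((fun w : ℂ => a • w) ∘ ·) ∘ UniformOnFun.toFun {K : Set (↥uDisc) | IsCompact K}) :=
    (UniformOnFun.postcomp_uniformContinuous (uniformContinuous_const_smul a)).continuous
  have hgco : @ContinuousOn X Y tX tY g (Metric.closedBall (0 : X) 1) := by
    rw [show tY = TopologicalSpace.induced (fun y : Y => toCO (ιY y)) inferInstance from rfl]
    refine (IsInducing.induced (fun y : Y => toCO (ιY y))).continuousOn_iff.mpr ?_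
    have key : ∀ x : X, toCO (ιY (g x)) =
        (UniformOnFun.ofFun {K : Set (↥uDisc) | IsCompact K} ∘
          ((fun w : ℂ => a • w) ∘ ·) ∘ UniformOnFun.toFun {K : Set (↥uDisc) | IsCompact K})
          (toCO (ιY (T x))) := by
      intro x
      show toCO (ιY (a • T x)) = _
      rw [_root_.map_smul]
      rfl
    exact (hmul.comp_continuousOn hTco).congr fun x _ => key x
  have hmaps : Set.MapsTo g (Metric.closedBall (0 : X) 1) (Metric.closedBall (0 : Y) 1) := by
    intro x hx
    simp only [Metric.mem_closedBall, dist_zero_right] at hx ⊢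
    have : ‖g x‖ = c⁻¹ * ‖T x‖ := by
      show ‖a • T x‖ = _
      rw [norm_smul, ha, Complex.norm_real, Real.norm_eq_abs,
        abs_of_pos (inv_pos.mpr hc0)]
    rw [this]
    have h1 : ‖T x‖ ≤ ‖T‖ := T.unit_le_opNorm x hx
    have h2 : ‖T‖ ≤ c := by simp [hc]
    calc c⁻¹ * ‖T x‖ ≤ c⁻¹ * c := by
          apply mul_le_mul_of_nonneg_left (h1.trans h2) (le_of_lt (inv_pos.mpr hc0))
      _ = 1 := inv_mul_cancel₀ (ne_of_gt hc0)
  have hucomp : @ContinuousOn X ℂ tX _ (fun x => u (g x)) (Metric.closedBall (0 : X) 1) :=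
    ContinuousOn.comp hu hgco hmaps
  have hfun : ∀ x : X, u (T x) = (c : ℂ) * u (g x) := by
    intro x
    have hca : (c : ℂ) * a = 1 := by
      rw [ha]
      norm_cast
      exact mul_inv_cancel₀ hc0.ne'
    show u (T x) = (c : ℂ) * u (a • T x)
    rw [_root_.map_smul, smul_eq_mul, ← mul_assoc, hca, one_mul]
  show @ContinuousOn X ℂ tX _ (fun x => u (T x)) (Metric.closedBall (0 : X) 1)
  simp only [hfun]
  exact continuousOn_const.mul hucomp

set_option synthInstance.maxHeartbeats 1000000 in
set_option maxHeartbeats 1000000 in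

/-- The predual operator `S : *Y → *X`, `S u = u ∘ T`. -/
def predualMap {X Y : Type} [NormedAddCommGroup X] [NormedSpace ℂ X]
    [NormedAddCommGroup Y] [NormedSpace ℂ Y]
    (ιX : X →ₗ[ℂ] (ℂ → ℂ)) (ιY : Y →ₗ[ℂ] (ℂ → ℂ))
    (T : X →L[ℂ] Y)
    (hTco : @ContinuousOn X CO (coTopOn (fun x : X => ιX x)) _
      (fun x => toCO (ιY (T x))) (Metric.closedBall (0 : X) 1)) :
    ↥(preD (fun y : Y => ιY y)) →L[ℂ] ↥(preD (fun x : X => ιX x)) :=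
  let L : ↥(preD (fun y : Y => ιY y)) →ₗ[ℂ] ↥(preD (fun x : X => ιX x)) :=
    { toFun := fun u => ⟨u.1.comp T, comp_mem_preD ιX ιY T hTco u.1 u.2⟩
      map_add' := fun u v => Subtype.ext (by ext x; simp)
      map_smul' := fun c u => Subtype.ext (by ext x; simp) }
  { toLinearMap := L
    cont := AddMonoidHomClass.continuous_of_bound L ‖T‖ (fun u => by
      show ‖u.1.comp T‖ ≤ ‖T‖ * ‖u‖
      calc ‖u.1.comp T‖ ≤ ‖u.1‖ * ‖T‖ := ContinuousLinearMap.opNorm_comp_le _ _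
        _ = ‖T‖ * ‖u‖ := mul_comm _ _) }

/-- If `X, Y ⊂ H(𝔻)` satisfy condition (I), `T : X → Y` is bounded and
`T|B_X` is co-co-continuous, then `Φ_Y ∘ T ∘ Φ_X⁻¹ : (*X)* → (*Y)*` is weak*-to-weak*
continuous (equivalently, `T` is `σ(X,*X)`-`σ(Y,*Y)` continuous), and consequently
there is a bounded operator `S : *Y → *X` with `T = Φ_Y⁻¹ ∘ S* ∘ Φ_X`, i.e.
`u (T x) = (S u) x` for all `u ∈ *Y`, `x ∈ X`. -/
theorem exists_predual_operator
    {X Y : Type} [NormedAddCommGroup X] [NormedSpace ℂ X] [CompleteSpace X]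
    [NormedAddCommGroup Y] [NormedSpace ℂ Y] [CompleteSpace Y]
    (ιX : X →ₗ[ℂ] (ℂ → ℂ)) (ιY : Y →ₗ[ℂ] (ℂ → ℂ))
    (hXinj : ∀ x y : X, Set.EqOn (ιX x) (ιX y) uDisc → x = y)
    (hYinj : ∀ x y : Y, Set.EqOn (ιY x) (ιY y) uDisc → x = y)
    (hXhol : ∀ x : X, DifferentiableOn ℂ (ιX x) uDisc)
    (hYhol : ∀ y : Y, DifferentiableOn ℂ (ιY y) uDisc)
    (hXconst : ∀ c : ℂ, ∃ x : X, Set.EqOn (ιX x) (fun _ => c) uDisc)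
    (hYconst : ∀ c : ℂ, ∃ y : Y, Set.EqOn (ιY y) (fun _ => c) uDisc)
    (hXI : CondI (fun x : X => ιX x)) (hYI : CondI (fun y : Y => ιY y))
    (T : X →L[ℂ] Y)
    (hTco : @ContinuousOn X CO (coTopOn (fun x : X => ιX x)) _
      (fun x => toCO (ιY (T x))) (Metric.closedBall (0 : X) 1)) :
    (@Continuous X Y
      (TopologicalSpace.induced
        (fun x : X => (fun ℓ : ↥(preD (fun x : X => ιX x)) => (ℓ : X →L[ℂ] ℂ) x))
        Pi.topologicalSpace)
      (TopologicalSpace.induced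
        (fun y : Y => (fun ℓ : ↥(preD (fun y : Y => ιY y)) => (ℓ : Y →L[ℂ] ℂ) y))
        Pi.topologicalSpace)
      (fun x => T x)) ∧
    (∃ S : ↥(preD (fun y : Y => ιY y)) →L[ℂ] ↥(preD (fun x : X => ιX x)),
      ∀ (u : ↥(preD (fun y : Y => ιY y))) (x : X),
        (u : Y →L[ℂ] ℂ) (T x) = ((S u : X →L[ℂ] ℂ)) x) := by
  have key : ∀ u : Y →L[ℂ] ℂ, u ∈ preD (fun y : Y => ιY y) →
      u.comp T ∈ preD (fun x : X => ιX x) := fun u hu => comp_mem_preD ιX ιY T hTco u hu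
  constructor
  · refine continuous_induced_rng.mpr ?_
    have hF : Continuous (fun p : (↥(preD (fun x : X => ιX x)) → ℂ) =>
        (fun ℓ : ↥(preD (fun y : Y => ιY y)) =>
          p ⟨ℓ.1.comp T, key ℓ.1 ℓ.2⟩)) :=
      continuous_pi fun ℓ => continuous_apply _
    exact @Continuous.comp X (↥(preD (fun x : X => ιX x)) → ℂ)
      (↥(preD (fun y : Y => ιY y)) → ℂ)
      (TopologicalSpace.induced
        (fun x : X => (fun ℓ : ↥(preD (fun x : X => ιX x)) => (ℓ : X →L[ℂ] ℂ) x))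
        Pi.topologicalSpace)
      Pi.topologicalSpace Pi.topologicalSpace _ _ hF
      (@continuous_induced_dom X (↥(preD (fun x : X => ιX x)) → ℂ)
        (fun x => (fun m : ↥(preD (fun x : X => ιX x)) => m.1 x)) Pi.topologicalSpace)
  · exact ⟨predualMap ιX ιY T hTco, fun u x => rfl⟩
end
end

section
/- Let 1 ≤ p < ∞ and p − 2 < α < ∞, and set β = (2+α)/p − 1 (so β > 0). Then the classical Volterra operator T_g: A_α^p → H_{v_β}^∞ is compact if and only if lim_{|z|→1} |g′(z)| = 0, which holds if and only if g is a constant function; in particular T_g: A_α^p → H_{v_β}^∞ is compact if and only if T_g = 0. -/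
noncomputable section

open Complex MeasureTheory Metric Set Filter Topology

namespace VoltAux

open Complex

lemma mem_uDisc {z : ℂ} : z ∈ uDisc ↔ norm z < 1 := by
  simp [uDisc, Metric.mem_ball, Complex.dist_eq]

lemma isOpen_uDisc : IsOpen uDisc := Metric.isOpen_ball

lemma uDisc_pos {z : ℂ} (hz : z ∈ uDisc) : 0 < 1 - norm z ^ 2 := by
  rw [mem_uDisc] at hz
  nlinarith [norm_nonneg z]

lemma smul_mem_uDisc {z : ℂ} (hz : z ∈ uDisc) {t : ℝ} (ht0 : 0 ≤ t) (ht1 : t ≤ 1) :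
    (t : ℂ) * z ∈ uDisc := by
  rw [mem_uDisc] at hz ⊢
  rw [norm_mul]
  calc norm (t:ℂ) * norm z ≤ 1 * norm z := by
        apply mul_le_mul_of_nonneg_right _ (norm_nonneg z)
        rwa [Complex.norm_real, Real.norm_eq_abs, _root_.abs_of_nonneg ht0]
    _ < 1 := by rwa [one_mul]

lemma derivDiff {f : ℂ → ℂ} (hf : DifferentiableOn ℂ f uDisc) :
    DifferentiableOn ℂ (deriv f) uDisc :=
  ((hf.analyticOnNhd isOpen_uDisc).deriv).differentiableOn

lemma derivCont {f : ℂ → ℂ} (hf : DifferentiableOn ℂ f uDisc) :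
    ContinuousOn (deriv f) uDisc :=
  ((hf.analyticOnNhd isOpen_uDisc).deriv).continuousOn

lemma deriv_zero_of_vanishBd {g : ℂ → ℂ} (hg : DifferentiableOn ℂ g uDisc)
    (hv : vanishBd fun z => norm (deriv g z)) :
    ∀ z ∈ uDisc, deriv g z = 0 := by
  intro a ha
  have ha1 : norm a < 1 := mem_uDisc.1 ha
  have key : ∀ ε : ℝ, 0 < ε → norm (deriv g a) ≤ ε := by
    intro ε hε
    obtain ⟨s, hs0, hs1, hsb⟩ := hv ε hε
    set ρ : ℝ := (max s (norm a) + 1) / 2 with hρdef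
    have hms : s ≤ max s (norm a) := le_max_left _ _
    have hma : norm a ≤ max s (norm a) := le_max_right _ _
    have hm0 : (0:ℝ) ≤ max s (norm a) := le_trans hs0 hms
    have hm1 : max s (norm a) < 1 := max_lt hs1 ha1
    have hρ1 : ρ < 1 := by rw [hρdef]; linarith
    have hρgt : max s (norm a) < ρ := by rw [hρdef]; linarith
    have hρ0 : 0 < ρ := by rw [hρdef]; linarith
    have hsub : Metric.closedBall (0:ℂ) ρ ⊆ uDisc := by
      intro z hz
      rw [Metric.mem_closedBall, Complex.dist_eq, sub_zero] at hz
      exact mem_uDisc.2 (lt_of_le_of_lt hz hρ1)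
    have hdc : DiffContOnCl ℂ (deriv g) (Metric.ball (0:ℂ) ρ) := by
      apply DifferentiableOn.diffContOnCl
      rw [closure_ball (0:ℂ) (ne_of_gt hρ0)]
      exact (derivDiff hg).mono hsub
    have hfr : ∀ z ∈ frontier (Metric.ball (0:ℂ) ρ), ‖deriv g z‖ ≤ ε := by
      intro z hz
      rw [frontier_ball (0:ℂ) (ne_of_gt hρ0)] at hz
      rw [Metric.mem_sphere, Complex.dist_eq, sub_zero] at hz
      have hz1 : z ∈ uDisc := mem_uDisc.2 (by rw [hz]; exact hρ1)
      have := hsb z hz1 (by rw [hz]; exact lt_of_le_of_lt hms hρgt)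
      simpa using this.le
    have hmem : a ∈ closure (Metric.ball (0:ℂ) ρ) := by
      rw [closure_ball (0:ℂ) (ne_of_gt hρ0)]
      exact Metric.mem_closedBall.2 (by rw [Complex.dist_eq, sub_zero]; linarith)
    have := Complex.norm_le_of_forall_mem_frontier_norm_le
      Metric.isBounded_ball hdc hfr hmem
    simpa using this
  have h0 : norm (deriv g a) ≤ 0 :=
    le_of_forall_pos_le_add (by intro ε hε; simpa using key ε hε)
  exact norm_eq_zero.1 (le_antisymm h0 (norm_nonneg _))

lemma const_of_deriv_zero {g : ℂ → ℂ} (hg : DifferentiableOn ℂ g uDisc)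
    (h0 : ∀ z ∈ uDisc, deriv g z = 0) : ∀ z ∈ uDisc, ∀ w ∈ uDisc, g z = g w := by
  intro z hz w hw
  apply Convex.is_const_of_fderivWithin_eq_zero (𝕜 := ℂ) (convex_ball (0:ℂ) 1) hg _ hz hw
  intro x hx
  have hd : DifferentiableAt ℂ g x := hg.differentiableAt (isOpen_uDisc.mem_nhds hx)
  have h1 : HasDerivAt g 0 x := by
    have := hd.hasDerivAt
    rwa [h0 x hx] at this
  have h2 : HasFDerivAt g (0 : ℂ →L[ℂ] ℂ) x := by
    have h3 := hasDerivAt_iff_hasFDerivAt.1 h1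
    have h4 : ContinuousLinearMap.toSpanSingleton ℂ (0:ℂ) = 0 := by
      ext y; simp
    rwa [h4] at h3
  rw [fderivWithin_of_isOpen isOpen_ball hx, h2.fderiv]

lemma deriv_zero_of_const {g : ℂ → ℂ} (hc : ∀ z ∈ uDisc, ∀ w ∈ uDisc, g z = g w) :
    ∀ z ∈ uDisc, deriv g z = 0 := by
  intro z hz
  have h : g =ᶠ[nhds z] fun _ => g z := by
    filter_upwards [isOpen_uDisc.mem_nhds hz] with w hw
    exact hc w hw z hz
  rw [h.deriv_eq]
  exact deriv_const _ _

lemma volterra_eq_zero {g : ℂ → ℂ} (h0 : ∀ z ∈ uDisc, deriv g z = 0)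
    (f : ℂ → ℂ) {z : ℂ} (hz : z ∈ uDisc) : volterra g f z = 0 := by
  unfold volterra
  rw [intervalIntegral.integral_congr (g := fun _ => (0:ℂ)) ?_]
  · simp
  · intro t ht
    rw [Set.uIcc_of_le (by norm_num : (0:ℝ) ≤ 1)] at ht
    show f ((t:ℂ)*z) * deriv g ((t:ℂ)*z) = 0
    rw [h0 _ (smul_mem_uDisc hz ht.1 ht.2), mul_zero]

lemma volterra_congr {g f₁ f₂ : ℂ → ℂ} (h : Set.EqOn f₁ f₂ uDisc) {z : ℂ} (hz : z ∈ uDisc) :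
    volterra g f₁ z = volterra g f₂ z := by
  unfold volterra
  congr 1
  apply intervalIntegral.integral_congr
  intro t ht
  rw [Set.uIcc_of_le (by norm_num : (0:ℝ) ≤ 1)] at ht
  show f₁ ((t:ℂ)*z) * deriv g ((t:ℂ)*z) = f₂ ((t:ℂ)*z) * deriv g ((t:ℂ)*z)
  rw [h (smul_mem_uDisc hz ht.1 ht.2)]

lemma volterra_abs_le {g f : ℂ → ℂ} {z : ℂ} (hz : z ∈ uDisc) {C : ℝ}     (hC : ∀ t : ℝ, 0 ≤ t → t ≤ 1 → norm (f ((t:ℂ)*z) * deriv g ((t:ℂ)*z)) ≤ C) :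
    norm (volterra g f z) ≤ C := by
  unfold volterra
  rw [norm_mul]
  have h1 : norm z ≤ 1 := (mem_uDisc.1 hz).le
  have h2 : ‖∫ t in (0:ℝ)..1, f ((t:ℂ)*z) * deriv g ((t:ℂ)*z)‖ ≤ C * |1 - 0| := by
    apply intervalIntegral.norm_integral_le_of_norm_le_const
    intro t ht
    rw [Set.uIoc_of_le (by norm_num : (0:ℝ) ≤ 1)] at ht
    exact hC t ht.1.le ht.2
  calc norm z * norm (∫ t in (0:ℝ)..1, f ((t:ℂ)*z) * deriv g ((t:ℂ)*z))
      ≤ 1 * C := by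
        apply mul_le_mul h1 (by simpa using h2) (norm_nonneg _) zero_le_one
    _ = C := one_mul C

end VoltAux
namespace VoltAux

lemma eval_bound {E : Type} [NormedAddCommGroup E] [NormedSpace ℂ E] {β : ℝ}
    (ιE : E →ₗ[ℂ] (ℂ → ℂ))
    (hE : RealizesSpace ιE (memHvInf (stdWeight β)) (hvNorm (stdWeight β)))
    (y : E) {z : ℂ} (hz : z ∈ uDisc) :
    stdWeight β z * norm (ιE y z) ≤ ‖y‖ := by
  rw [hE.2.2.2 y]
  exact le_csSup (hE.2.1 y).2 ⟨z, hz, rfl⟩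

lemma stdWeight_pos {β : ℝ} {z : ℂ} (hz : z ∈ uDisc) : 0 < stdWeight β z :=
  Real.rpow_pos_of_pos (uDisc_pos hz) β

lemma deriv_bound {E : Type} [NormedAddCommGroup E] [NormedSpace ℂ E] {β : ℝ} (hβ : 0 < β)
    (ιE : E →ₗ[ℂ] (ℂ → ℂ))
    (hE : RealizesSpace ιE (memHvInf (stdWeight β)) (hvNorm (stdWeight β)))
    (y : E) {a : ℂ} (ha : a ∈ uDisc) :
    (1 - norm a ^ 2) ^ (β + 1) * norm (deriv (ιE y) a) ≤
      4 ^ (β + 1) * ‖y‖ := by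
  have ha1 : norm a < 1 := mem_uDisc.1 ha
  have ha0 : 0 ≤ norm a := norm_nonneg a
  set r : ℝ := (1 - norm a) / 2 with hrdef
  have hr : 0 < r := by rw [hrdef]; linarith
  have hsub : Metric.closedBall a r ⊆ uDisc := by
    intro z hz
    rw [Metric.mem_closedBall, Complex.dist_eq] at hz
    have : norm z ≤ norm a + r := by
      calc norm z = norm (a + (z - a)) := by ring_nf
        _ ≤ norm a + norm (z - a) := norm_add_le _ _
        _ ≤ norm a + r := by linarith
    exact mem_uDisc.2 (by rw [hrdef] at this; linarith)
  have hd : DifferentiableOn ℂ (ιE y) uDisc := (hE.2.1 y).1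
  have hdc : DiffContOnCl ℂ (ιE y) (Metric.ball a r) := by
    apply DifferentiableOn.diffContOnCl
    rw [closure_ball a hr.ne']
    exact hd.mono hsub
  have hy0 : (0:ℝ) ≤ ‖y‖ := norm_nonneg y
  have hrb : 0 < r ^ β := Real.rpow_pos_of_pos hr β
  have key : ∀ z ∈ Metric.sphere a r, ‖ιE y z‖ ≤ ‖y‖ / r ^ β := by
    intro z hz
    have hz' : z ∈ uDisc := hsub (Metric.sphere_subset_closedBall hz)
    rw [Metric.mem_sphere, Complex.dist_eq] at hz
    have hz1 : norm z ≤ norm a + r := by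
      calc norm z = norm (a + (z - a)) := by ring_nf
        _ ≤ norm a + norm (z - a) := norm_add_le _ _
        _ = norm a + r := by rw [hz]
    have hbase : r ≤ 1 - norm z ^ 2 := by
      have hz0 : 0 ≤ norm z := norm_nonneg z
      have : norm z ≤ (1 + norm a) / 2 := by rw [hrdef] at hz1; linarith
      nlinarith
    have hwle : r ^ β ≤ stdWeight β z :=
      Real.rpow_le_rpow hr.le hbase hβ.le
    have := eval_bound ιE hE y hz'
    rw [le_div_iff₀ hrb]
    calc norm (ιE y z) * r ^ β = r ^ β * norm (ιE y z) := mul_comm _ _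
      _ ≤ stdWeight β z * norm (ιE y z) :=
          mul_le_mul_of_nonneg_right hwle (norm_nonneg _)
      _ ≤ ‖y‖ := this
  have hC := Complex.norm_deriv_le_of_forall_mem_sphere_norm_le hr hdc key
  have hW : (1 - norm a ^ 2) ^ (β + 1) ≤ 4 ^ (β + 1) * r ^ (β + 1) := by
    have hb1 : 1 - norm a ^ 2 ≤ 4 * r := by rw [hrdef]; nlinarith
    have h4r : (4:ℝ) * r > 0 := by linarith
    calc (1 - norm a ^ 2) ^ (β + 1) ≤ (4 * r) ^ (β + 1) :=
          Real.rpow_le_rpow (uDisc_pos ha).le hb1 (by linarith)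
      _ = 4 ^ (β + 1) * r ^ (β + 1) := Real.mul_rpow (by norm_num) hr.le
  have hrsplit : r ^ (β + 1) = r ^ β * r := by
    rw [Real.rpow_add hr, Real.rpow_one]
  have hDpos : 0 ≤ norm (deriv (ιE y) a) := norm_nonneg _
  have h4 : (0:ℝ) < 4 ^ (β + 1) := Real.rpow_pos_of_pos (by norm_num) _
  calc (1 - norm a ^ 2) ^ (β + 1) * norm (deriv (ιE y) a)
      ≤ (4 ^ (β + 1) * r ^ (β + 1)) * (‖y‖ / r ^ β / r) := by
        apply mul_le_mul hW hC hDpos (by positivity)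
    _ = 4 ^ (β + 1) * ‖y‖ := by
        rw [hrsplit]; field_simp
end VoltAux
namespace VoltAux

lemma hasDerivAt_volterra {g f : ℂ → ℂ} (hg : DifferentiableOn ℂ g uDisc)
    (hf : DifferentiableOn ℂ f uDisc) {a : ℂ} (ha : a ∈ uDisc) :
    HasDerivAt (volterra g f) (f a * deriv g a) a := by
  classical
  set G : ℂ → ℂ := fun z => f z * deriv g z with hGdef
  have hG : DifferentiableOn ℂ G uDisc := hf.mul (derivDiff hg)
  have hGc : ContinuousOn G uDisc := hG.continuousOn
  have hG'c : ContinuousOn (deriv G) uDisc := derivCont hG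
  have ha1 : norm a < 1 := mem_uDisc.1 ha
  have ha0 : 0 ≤ norm a := norm_nonneg a
  set ε : ℝ := (1 - norm a) / 4 with hεdef
  have hε0 : 0 < ε := by rw [hεdef]; linarith
  set ρ : ℝ := (1 + norm a) / 2 with hρdef
  have hρ1 : ρ < 1 := by rw [hρdef]; linarith
  have hρ0 : 0 < ρ := by rw [hρdef]; linarith
  have hsubρ : Metric.closedBall (0:ℂ) ρ ⊆ uDisc := by
    intro z hz
    rw [Metric.mem_closedBall, Complex.dist_eq, sub_zero] at hz
    exact mem_uDisc.2 (lt_of_le_of_lt hz hρ1)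
  have hmemρ : ∀ t : ℝ, 0 ≤ t → t ≤ 1 → ∀ x : ℂ, norm x ≤ norm a + ε →
      (t:ℂ) * x ∈ Metric.closedBall (0:ℂ) ρ := by
    intro t ht0 ht1 x hx
    rw [Metric.mem_closedBall, Complex.dist_eq, sub_zero, norm_mul, Complex.norm_real, Real.norm_eq_abs,
      _root_.abs_of_nonneg ht0]
    have hx0 : 0 ≤ norm x := norm_nonneg x
    have h1 : t * norm x ≤ norm x := by nlinarith
    have h2 : norm a + ε ≤ ρ := by rw [hεdef, hρdef]; linarith
    linarith
  have hmemD : ∀ t : ℝ, 0 ≤ t → t ≤ 1 → ∀ x : ℂ, norm x ≤ norm a + ε →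
      (t:ℂ) * x ∈ uDisc := fun t ht0 ht1 x hx => hsubρ (hmemρ t ht0 ht1 x hx)
  have haself : ∀ t : ℝ, 0 ≤ t → t ≤ 1 → (t:ℂ) * a ∈ uDisc := fun t ht0 ht1 =>
    hmemD t ht0 ht1 a (by linarith)
  obtain ⟨Cb, hCb⟩ := (isCompact_closedBall (0:ℂ) ρ).exists_bound_of_continuousOn
    (hG'c.mono hsubρ)
  -- continuity of t ↦ t*x as map ℝ → ℂ
  have hcont_tx : ∀ x : ℂ, Continuous fun t : ℝ => (t:ℂ) * x := by
    intro x; exact (Complex.continuous_ofReal.mul continuous_const)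
  have hball : ∀ x ∈ Metric.ball a ε, norm x ≤ norm a + ε := by
    intro x hx
    rw [Metric.mem_ball, Complex.dist_eq] at hx
    calc norm x = norm (a + (x - a)) := by ring_nf
      _ ≤ norm a + norm (x - a) := norm_add_le _ _
      _ ≤ norm a + ε := by linarith
  have hcontF : ∀ x : ℂ, norm x ≤ norm a + ε →
      ContinuousOn (fun t : ℝ => G ((t:ℂ) * x)) (Set.Icc (0:ℝ) 1) := by
    intro x hx
    apply hGc.comp (hcont_tx x).continuousOn
    intro t ht
    exact hmemD t ht.1 ht.2 x hx
  have hcontF' : ∀ x : ℂ, norm x ≤ norm a + ε →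
      ContinuousOn (fun t : ℝ => (t:ℂ) * deriv G ((t:ℂ) * x)) (Set.Icc (0:ℝ) 1) := by
    intro x hx
    apply (Complex.continuous_ofReal.continuousOn).mul
    apply hG'c.comp (hcont_tx x).continuousOn
    intro t ht
    exact hmemD t ht.1 ht.2 x hx
  have hIoc : Set.uIoc (0:ℝ) 1 = Set.Ioc (0:ℝ) 1 := Set.uIoc_of_le (by norm_num)
  have hIcc : Set.uIcc (0:ℝ) 1 = Set.Icc (0:ℝ) 1 := Set.uIcc_of_le (by norm_num)
  have hIoc_sub : Set.Ioc (0:ℝ) 1 ⊆ Set.Icc (0:ℝ) 1 := Set.Ioc_subset_Icc_self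
  -- differentiation under the integral sign
  have hΦ : HasDerivAt (fun x : ℂ => ∫ t in (0:ℝ)..1, G ((t:ℂ) * x))
      (∫ t in (0:ℝ)..1, (t:ℂ) * deriv G ((t:ℂ) * a)) a := by
    have H := intervalIntegral.hasDerivAt_integral_of_dominated_loc_of_deriv_le
      (F := fun (x : ℂ) (t : ℝ) => G ((t:ℂ) * x))
      (F' := fun (x : ℂ) (t : ℝ) => (t:ℂ) * deriv G ((t:ℂ) * x))
      (x₀ := a) (bound := fun _ => Cb) (a := 0) (b := 1) (μ := MeasureTheory.volume)
      (s := Metric.ball a ε) (Metric.ball_mem_nhds a hε0) ?_ ?_ ?_ ?_ ?_ ?_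
    · exact H.2
    · -- measurability near a
      filter_upwards [Metric.ball_mem_nhds a hε0] with x hx
      exact (((hcontF x (hball x hx)).mono (by rw [hIoc]; exact hIoc_sub))).aestronglyMeasurable
        measurableSet_uIoc
    · apply ContinuousOn.intervalIntegrable
      rw [hIcc]; exact hcontF a (by linarith)
    · exact ((hcontF' a (by linarith)).mono (by rw [hIoc]; exact hIoc_sub)).aestronglyMeasurable
        measurableSet_uIoc
    · apply MeasureTheory.ae_of_all
      intro t ht x hx
      rw [hIoc] at ht
      have hx' := hball x hx
      have hmem := hmemρ t ht.1.le ht.2 x hx'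
      rw [norm_mul, Complex.norm_real, Real.norm_eq_abs, _root_.abs_of_nonneg ht.1.le]
      have h1 := hCb _ hmem
      have h2 : 0 ≤ norm (deriv G ((t:ℂ)*x)) := norm_nonneg _
      nlinarith [ht.2, ht.1.le]
    · exact intervalIntegrable_const
    · apply MeasureTheory.ae_of_all
      intro t ht x hx
      rw [hIoc] at ht
      have hx' := hball x hx
      have hd : DifferentiableAt ℂ G ((t:ℂ) * x) :=
        hG.differentiableAt (isOpen_uDisc.mem_nhds (hmemD t ht.1.le ht.2 x hx'))
      have hinner : HasDerivAt (fun x : ℂ => (t:ℂ) * x) ((t:ℂ) * 1) x :=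
        (hasDerivAt_id x).const_mul (t:ℂ)
      have hcomp := hd.hasDerivAt.comp x hinner
      have h2 : deriv G ((t:ℂ)*x) * ((t:ℂ)*1) = (t:ℂ) * deriv G ((t:ℂ)*x) := by ring
      rw [h2] at hcomp
      exact hcomp
  -- FTC computation
  have hFTC : (∫ t in (0:ℝ)..1, (G ((t:ℂ) * a) + (t:ℂ) * (a * deriv G ((t:ℂ) * a)))) = G a := by
    have hψ : ∀ t ∈ Set.uIcc (0:ℝ) 1,
        HasDerivAt (fun t : ℝ => (t:ℂ) * G ((t:ℂ) * a))
          (G ((t:ℂ) * a) + (t:ℂ) * (a * deriv G ((t:ℂ) * a))) t := by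
      intro t ht
      rw [hIcc] at ht
      have hre : HasDerivAt (fun t : ℝ => (t:ℂ)) 1 t := by
        simpa using! Complex.ofRealCLM.hasDerivAt (x := t)
      have hinner : HasDerivAt (fun t : ℝ => (t:ℂ) * a) ((1:ℂ) * a) t := hre.mul_const a
      have hd : DifferentiableAt ℂ G ((t:ℂ) * a) :=
        hG.differentiableAt (isOpen_uDisc.mem_nhds (haself t ht.1 ht.2))
      have hcomp : HasDerivAt (fun t : ℝ => G ((t:ℂ) * a)) (((1:ℂ) * a) • deriv G ((t:ℂ)*a)) t :=
        by simpa using! HasDerivAt.scomp t hd.hasDerivAt hinner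
      have := hre.mul hcomp
      simpa [smul_eq_mul] using! this
    have hcontG' : ContinuousOn (fun t : ℝ => deriv G ((t:ℂ) * a)) (Set.Icc (0:ℝ) 1) := by
      apply hG'c.comp (hcont_tx a).continuousOn
      intro t ht
      exact haself t ht.1 ht.2
    have hci : IntervalIntegrable
        (fun t : ℝ => (G ((t:ℂ) * a) + (t:ℂ) * (a * deriv G ((t:ℂ) * a))))
        MeasureTheory.volume 0 1 := by
      apply ContinuousOn.intervalIntegrable
      rw [hIcc]
      exact (hcontF a (by linarith)).add
        ((Complex.continuous_ofReal.continuousOn).mul (continuousOn_const.mul hcontG'))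
    have := intervalIntegral.integral_eq_sub_of_hasDerivAt hψ hci
    simpa using this
  -- combine
  have hint1 : IntervalIntegrable (fun t : ℝ => G ((t:ℂ) * a)) MeasureTheory.volume 0 1 := by
    apply ContinuousOn.intervalIntegrable
    rw [hIcc]; exact hcontF a (by linarith)
  have hcontG' : ContinuousOn (fun t : ℝ => deriv G ((t:ℂ) * a)) (Set.Icc (0:ℝ) 1) := by
    apply hG'c.comp (hcont_tx a).continuousOn
    intro t ht
    exact haself t ht.1 ht.2
  have hint2 : IntervalIntegrable (fun t : ℝ => (t:ℂ) * (a * deriv G ((t:ℂ) * a)))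
      MeasureTheory.volume 0 1 := by
    apply ContinuousOn.intervalIntegrable
    rw [hIcc]
    exact (Complex.continuous_ofReal.continuousOn).mul (continuousOn_const.mul hcontG')
  have hsplit : (∫ t in (0:ℝ)..1, (G ((t:ℂ) * a) + (t:ℂ) * (a * deriv G ((t:ℂ) * a))))
      = (∫ t in (0:ℝ)..1, G ((t:ℂ) * a)) + ∫ t in (0:ℝ)..1, (t:ℂ) * (a * deriv G ((t:ℂ) * a)) :=
    intervalIntegral.integral_add hint1 hint2
  have hpull : (∫ t in (0:ℝ)..1, (t:ℂ) * (a * deriv G ((t:ℂ) * a)))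
      = a * ∫ t in (0:ℝ)..1, (t:ℂ) * deriv G ((t:ℂ) * a) := by
    rw [← intervalIntegral.integral_const_mul]
    apply intervalIntegral.integral_congr
    intro t _
    ring
  have hmul := (hasDerivAt_id a).mul hΦ
  simp only [id_eq, one_mul] at hmul
  have hval : (∫ t in (0:ℝ)..1, G ((t:ℂ) * a))
      + a * (∫ t in (0:ℝ)..1, (t:ℂ) * deriv G ((t:ℂ) * a)) = G a := by
    rw [← hpull, ← hsplit, hFTC]
  rw [hval] at hmul
  exact hmul

end VoltAux
namespace VoltAux

open Complex

lemma one_sub_props {z : ℂ} (hz : norm z < 1) :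
    (1 - z) ≠ 0 ∧ (1 - z) ∈ Complex.slitPlane ∧ 1 - norm z ≤ norm (1 - z) := by
  have h1 : z.re ≤ norm z := Complex.re_le_norm z
  have h2 : 0 < (1 - z).re := by
    rw [Complex.sub_re, Complex.one_re]; linarith
  refine ⟨fun h => by rw [h] at h2; simp at h2, Or.inl h2, ?_⟩
  have := norm_add_le (1 - z) z
  simp only [sub_add_cancel] at this
  rw [norm_one] at this
  linarith

/-- The Möbius involution of the disc. -/
noncomputable def mob (w u : ℂ) : ℂ := (w - u) / (1 - (starRingEnd ℂ) w * u)

lemma conjmul_abs_lt {w u : ℂ} (hw : norm w < 1) (hu : norm u < 1) :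
    norm ((starRingEnd ℂ) w * u) < 1 := by
  rw [norm_mul, Complex.norm_conj]
  have h1 : 0 ≤ norm w := norm_nonneg w
  have h2 : 0 ≤ norm u := norm_nonneg u
  nlinarith

lemma q_ne {w u : ℂ} (hw : norm w < 1) (hu : norm u < 1) :
    1 - (starRingEnd ℂ) w * u ≠ 0 :=
  (one_sub_props (conjmul_abs_lt hw hu)).1

lemma normSq_q_identity (w u : ℂ) :
    Complex.normSq (1 - (starRingEnd ℂ) w * u) - Complex.normSq (w - u)
      = (1 - Complex.normSq w) * (1 - Complex.normSq u) := by
  simp only [Complex.normSq_apply, Complex.sub_re, Complex.sub_im, Complex.one_re,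
    Complex.one_im, Complex.mul_re, Complex.mul_im, Complex.conj_re, Complex.conj_im]
  ring

lemma mob_normSq {w u : ℂ} (hw : norm w < 1) (hu : norm u < 1) :
    1 - Complex.normSq (mob w u)
      = (1 - Complex.normSq w) * (1 - Complex.normSq u)
        / Complex.normSq (1 - (starRingEnd ℂ) w * u) := by
  have hq := q_ne hw hu
  have hQ : 0 < Complex.normSq (1 - (starRingEnd ℂ) w * u) := Complex.normSq_pos.2 hq
  rw [mob, Complex.normSq_div, ← normSq_q_identity w u]
  rw [sub_div, div_self hQ.ne']

lemma normSq_lt_one_iff {z : ℂ} : Complex.normSq z < 1 ↔ norm z < 1 := by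
  rw [← Complex.sq_norm]
  have h := norm_nonneg z
  constructor
  · intro hlt; nlinarith
  · intro hlt; nlinarith

lemma mob_mem {w u : ℂ} (hw : norm w < 1) (hu : norm u < 1) :
    norm (mob w u) < 1 := by
  have hq := q_ne hw hu
  have hQ : 0 < Complex.normSq (1 - (starRingEnd ℂ) w * u) := Complex.normSq_pos.2 hq
  have hw' : Complex.normSq w < 1 := by rw [← Complex.sq_norm]; nlinarith [norm_nonneg w]
  have hu' : Complex.normSq u < 1 := by rw [← Complex.sq_norm]; nlinarith [norm_nonneg u]
  rw [← normSq_lt_one_iff]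
  have := mob_normSq hw hu
  have hpos : 0 < (1 - Complex.normSq w) * (1 - Complex.normSq u)
        / Complex.normSq (1 - (starRingEnd ℂ) w * u) := by
    apply div_pos (by nlinarith) hQ
  linarith

lemma mob_one_sub {w u : ℂ} (hw : norm w < 1) (hu : norm u < 1) :
    1 - (starRingEnd ℂ) w * mob w u
      = ((1 - Complex.normSq w : ℝ) : ℂ) / (1 - (starRingEnd ℂ) w * u) := by
  have hq := q_ne hw hu
  rw [mob, eq_div_iff hq]
  have hcw : (starRingEnd ℂ) w * w = (Complex.normSq w : ℂ) := by
    rw [mul_comm, Complex.mul_conj]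
  push_cast
  field_simp
  linear_combination -hcw

lemma mob_invol {w u : ℂ} (hw : norm w < 1) (hu : norm u < 1) :
    mob w (mob w u) = u := by
  have hq := q_ne hw hu
  have hw2 : Complex.normSq w < 1 := by rw [← Complex.sq_norm]; nlinarith [norm_nonneg w]
  have hA : ((1 - Complex.normSq w : ℝ) : ℂ) ≠ 0 := by
    simp only [ne_eq, Complex.ofReal_eq_zero]; linarith
  have h2 : 1 - (starRingEnd ℂ) w * mob w u ≠ 0 := by
    rw [mob_one_sub hw hu]; exact div_ne_zero hA hq
  have hcw : (starRingEnd ℂ) w * w = (Complex.normSq w : ℂ) := by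
    rw [mul_comm, Complex.mul_conj]
  rw [mob, mob_one_sub hw hu, mob]
  rw [div_eq_iff (div_ne_zero hA hq)]
  have hq' : 1 - u * (starRingEnd ℂ) w ≠ 0 := by rwa [mul_comm]
  push_cast
  field_simp
  linear_combination (-u) * hcw

end VoltAux
namespace VoltAux

open Complex

lemma mob_injOn {w : ℂ} (hw : norm w < 1) : Set.InjOn (mob w) uDisc := by
  intro u hu v hv h
  have h1 := congrArg (mob w) h
  rwa [mob_invol hw (mem_uDisc.1 hu), mob_invol hw (mem_uDisc.1 hv)] at h1

lemma mob_image {w : ℂ} (hw : norm w < 1) : mob w '' uDisc = uDisc := by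
  ext z
  constructor
  · rintro ⟨u, hu, rfl⟩
    exact mem_uDisc.2 (mob_mem hw (mem_uDisc.1 hu))
  · intro hz
    exact ⟨mob w z, mem_uDisc.2 (mob_mem hw (mem_uDisc.1 hz)), mob_invol hw (mem_uDisc.1 hz)⟩

lemma mob_hasDerivAt {w u : ℂ} (hw : norm w < 1) (hu : norm u < 1) :
    HasDerivAt (mob w)
      ((((Complex.normSq w : ℂ)) - 1) / (1 - (starRingEnd ℂ) w * u) ^ 2) u := by
  have hq := q_ne hw hu
  have hcw : (starRingEnd ℂ) w * w = (Complex.normSq w : ℂ) := by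
    rw [mul_comm, Complex.mul_conj]
  have h1 : HasDerivAt (fun u : ℂ => w - u) (-1) u := by
    simpa using (hasDerivAt_id u).const_sub w
  have h2 : HasDerivAt (fun u : ℂ => 1 - (starRingEnd ℂ) w * u) (-((starRingEnd ℂ) w)) u := by
    simpa using ((hasDerivAt_id u).const_mul ((starRingEnd ℂ) w)).const_sub 1
  have h3 := h1.div h2 hq
  refine HasDerivAt.congr_deriv (f := mob w) h3 ?_
  rw [div_eq_div_iff (pow_ne_zero 2 hq) (pow_ne_zero 2 hq)]
  linear_combination ((1 - (starRingEnd ℂ) w * u)^2 : ℂ) * hcw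

/-- determinant of multiplication by a complex number, as a real-linear map -/
lemma det_complex_mul (c : ℂ) :
    (((ContinuousLinearMap.smulRight (1 : ℂ →L[ℂ] ℂ) c).restrictScalars ℝ)).det
      = Complex.normSq c := by
  have : (((ContinuousLinearMap.smulRight (1 : ℂ →L[ℂ] ℂ) c).restrictScalars ℝ)).det
      = LinearMap.det
        ((((ContinuousLinearMap.smulRight (1 : ℂ →L[ℂ] ℂ) c).restrictScalars ℝ)) :
          ℂ →ₗ[ℝ] ℂ) := rfl
  rw [this, ← LinearMap.det_toMatrix Complex.basisOneI, Matrix.det_fin_two]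
  simp only [LinearMap.toMatrix_apply, Complex.coe_basisOneI_repr]
  simp [Complex.normSq_apply]
end VoltAux
namespace VoltAux

open Complex

/-- test functions: normalized Bergman-type kernels -/
noncomputable def testF (p α : ℝ) (w : ℂ) : ℂ → ℂ := fun z =>
  (((1 - norm w ^ 2) ^ ((α+2)/p) : ℝ) : ℂ) *
    (1 - (starRingEnd ℂ) w * z) ^ (((-2*(α+2)/p : ℝ) : ℂ))

lemma testF_diff (p α : ℝ) {w : ℂ} (hw : norm w < 1) :
    DifferentiableOn ℂ (testF p α w) uDisc := by
  intro z hz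
  have hz1 := mem_uDisc.1 hz
  have hslit := (one_sub_props (conjmul_abs_lt hw hz1)).2.1
  have h2 : HasDerivAt (fun u : ℂ => 1 - (starRingEnd ℂ) w * u) (-((starRingEnd ℂ) w)) z := by
    simpa using ((hasDerivAt_id z).const_mul ((starRingEnd ℂ) w)).const_sub 1
  have h3 := (h2.cpow_const (c := ((-2*(α+2)/p : ℝ) : ℂ)) hslit).differentiableAt
  exact ((h3.const_mul _).differentiableWithinAt)

lemma testF_abs (p α : ℝ) {w z : ℂ} (hw : norm w < 1) (hz : norm z < 1) :
    norm (testF p α w z)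
      = (1 - norm w ^ 2) ^ ((α+2)/p)
        * norm (1 - (starRingEnd ℂ) w * z) ^ (-2*(α+2)/p) := by
  have hA : (0:ℝ) < 1 - norm w ^ 2 := by nlinarith [norm_nonneg w]
  have hq := q_ne hw hz
  rw [testF, norm_mul, Complex.norm_real, Real.norm_eq_abs, _root_.abs_of_nonneg (Real.rpow_nonneg hA.le _)]
  congr 1
  rw [Complex.norm_cpow_of_ne_zero hq]
  simp [Complex.ofReal_re, Complex.ofReal_im]

lemma testF_at_self (p α : ℝ) {w : ℂ} (hp : 0 < p) (hw : norm w < 1) :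
    (1 - norm w ^ 2) ^ ((α+2)/p) * norm (testF p α w w) = 1 := by
  have hA : (0:ℝ) < 1 - norm w ^ 2 := by nlinarith [norm_nonneg w]
  have habs : norm (1 - (starRingEnd ℂ) w * w) = 1 - norm w ^ 2 := by
    have : 1 - (starRingEnd ℂ) w * w = (((1 - norm w ^ 2 : ℝ)) : ℂ) := by
      rw [mul_comm, Complex.mul_conj, Complex.sq_norm]
      push_cast
      ring
    rw [this, Complex.norm_real, Real.norm_eq_abs, _root_.abs_of_nonneg hA.le]
  rw [testF_abs p α hw hw, habs, ← mul_assoc, ← Real.rpow_add hA, ← Real.rpow_add hA]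
  rw [show (α+2)/p + (α+2)/p + (-2*(α+2)/p) = 0 by ring, Real.rpow_zero]

lemma testF_pointwise_bound (p α : ℝ) (hp : 0 < p) (hα2 : 0 < α + 2) {w z : ℂ}
    (hw : norm w < 1) (hz : norm z < 1) :
    norm (testF p α w z)
      ≤ (1 - norm w ^ 2) ^ ((α+2)/p) * (1 - norm z) ^ (-2*(α+2)/p) := by
  have hA : (0:ℝ) < 1 - norm w ^ 2 := by nlinarith [norm_nonneg w]
  have hz0 : (0:ℝ) < 1 - norm z := by linarith
  have hle : 1 - norm z ≤ norm (1 - (starRingEnd ℂ) w * z) := by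
    have h1 := (one_sub_props (conjmul_abs_lt hw hz)).2.2
    have h2 : norm ((starRingEnd ℂ) w * z) ≤ norm z := by
      rw [norm_mul, Complex.norm_conj]
      nlinarith [norm_nonneg w, norm_nonneg z]
    linarith
  rw [testF_abs p α hw hz]
  apply mul_le_mul_of_nonneg_left _ (Real.rpow_nonneg hA.le _)
  apply Real.rpow_le_rpow_of_nonpos hz0 hle
  apply div_nonpos_of_nonpos_of_nonneg (by linarith) hp.le

lemma testF_bergFun (p α : ℝ) (hp : 0 < p) {w z : ℂ} (hw : norm w < 1)
    (hz : norm z < 1) :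
    bergFun p α (testF p α w) z
      = (1 - norm w ^ 2) ^ (α+2) * (1 - norm z ^ 2) ^ α
        * norm (1 - (starRingEnd ℂ) w * z) ^ (-2*(α+2)) := by
  have hA : (0:ℝ) < 1 - norm w ^ 2 := by nlinarith [norm_nonneg w]
  have hq : (0:ℝ) < norm (1 - (starRingEnd ℂ) w * z) :=
    norm_pos_iff.2 (q_ne hw hz)
  rw [bergFun, testF_abs p α hw hz,
    Real.mul_rpow (Real.rpow_nonneg hA.le _) (Real.rpow_nonneg hq.le _),
    ← Real.rpow_mul hA.le, ← Real.rpow_mul hq.le,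
    div_mul_cancel₀ _ hp.ne', div_mul_cancel₀ _ hp.ne']
  ring

lemma rpow_magic {A B q : ℝ} (hA : 0 < A) (hB : 0 < B) (hq : 0 < q) (α : ℝ) :
    (A ^ 2 / (q ^ 2) ^ 2) * (A ^ (α+2) * ((A * B / q ^ 2) ^ α) * ((A / q) ^ (-2*(α+2)))) =
      B ^ α := by
  obtain ⟨a, rfl⟩ : ∃ a, A = Real.exp a := ⟨Real.log A, (Real.exp_log hA).symm⟩
  obtain ⟨b, rfl⟩ : ∃ b, B = Real.exp b := ⟨Real.log B, (Real.exp_log hB).symm⟩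
  obtain ⟨c, rfl⟩ : ∃ c, q = Real.exp c := ⟨Real.log q, (Real.exp_log hq).symm⟩
  simp only [← Real.exp_nat_mul, ← Real.exp_sub, ← Real.exp_add, ← Real.exp_mul]
  rw [Real.exp_eq_exp]
  ring

end VoltAux
namespace VoltAux

open Complex MeasureTheory

lemma berg_change (p α : ℝ) (hp : 0 < p) (hα2 : 0 < α + 2) {w : ℂ}
    (hw : norm w < 1)
    (hJ : IntegrableOn (fun u : ℂ => (1 - norm u ^ 2) ^ α) uDisc volume) :
    IntegrableOn (bergFun p α (testF p α w)) uDisc volume ∧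
      ∫ z in uDisc, bergFun p α (testF p α w) z
        = ∫ u in uDisc, (1 - norm u ^ 2) ^ α := by
  set f' : ℂ → ℂ →L[ℝ] ℂ := fun u =>
    (ContinuousLinearMap.smulRight (1 : ℂ →L[ℂ] ℂ)
      (((Complex.normSq w : ℂ) - 1) / (1 - (starRingEnd ℂ) w * u) ^ 2)).restrictScalars ℝ
    with hf'def
  have hder : ∀ u ∈ uDisc, HasFDerivWithinAt (mob w) (f' u) uDisc u := by
    intro u hu
    exact (((hasDerivAt_iff_hasFDerivAt.1
      (mob_hasDerivAt hw (mem_uDisc.1 hu))).restrictScalars ℝ).hasFDerivWithinAt)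
  have hinj := mob_injOn (w := w) hw
  have hms : MeasurableSet uDisc := measurableSet_ball
  have hptws : ∀ u ∈ uDisc,
      |(f' u).det| • bergFun p α (testF p α w) (mob w u) = (1 - norm u ^ 2) ^ α := by
    intro u hu
    have hu1 := mem_uDisc.1 hu
    have hq := q_ne hw hu1
    have habsq : 0 < norm (1 - (starRingEnd ℂ) w * u) := norm_pos_iff.2 hq
    have hA : (0:ℝ) < 1 - norm w ^ 2 := by nlinarith [norm_nonneg w]
    have hB : (0:ℝ) < 1 - norm u ^ 2 := by nlinarith [norm_nonneg u]
    have hdet : (f' u).det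
        = Complex.normSq (((Complex.normSq w : ℂ) - 1) / (1 - (starRingEnd ℂ) w * u) ^ 2) := by
      rw [hf'def]; exact det_complex_mul _
    have hdet2 : (f' u).det
        = (1 - norm w ^ 2) ^ 2 / ((norm (1 - (starRingEnd ℂ) w * u)) ^ 2) ^ 2 := by
      rw [hdet, Complex.normSq_div, map_pow]
      have h1 : ((Complex.normSq w : ℂ)) - 1 = (((Complex.normSq w - 1 : ℝ)) : ℂ) := by
        push_cast; ring
      rw [h1, Complex.normSq_ofReal, ← Complex.sq_norm (1 - (starRingEnd ℂ) w * u),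
        Complex.sq_norm w]
      ring
    have hmob1 := mob_mem hw hu1
    have hbf := testF_bergFun p α hp hw hmob1
    -- 1 - |mob|^2
    have hm2 : 1 - norm (mob w u) ^ 2
        = (1 - norm w ^ 2) * (1 - norm u ^ 2)
          / norm (1 - (starRingEnd ℂ) w * u) ^ 2 := by
      rw [Complex.sq_norm, Complex.sq_norm, Complex.sq_norm, mob_normSq hw hu1, Complex.sq_norm]
    -- |1 - conj w * mob|
    have hm3 : norm (1 - (starRingEnd ℂ) w * mob w u)
        = (1 - norm w ^ 2) / norm (1 - (starRingEnd ℂ) w * u) := by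
      rw [mob_one_sub hw hu1, norm_div, Complex.norm_real, Real.norm_eq_abs, Complex.sq_norm,
        _root_.abs_of_nonneg (by rw [← Complex.sq_norm]; exact hA.le)]
    rw [hdet2, hbf, hm2, hm3, _root_.abs_of_nonneg (by positivity), smul_eq_mul]
    exact rpow_magic hA hB habsq α
  have hEq : Set.EqOn (fun u => |(f' u).det| • bergFun p α (testF p α w) (mob w u))
      (fun u : ℂ => (1 - norm u ^ 2) ^ α) uDisc := fun u hu => hptws u hu
  constructor
  · have hiff := integrableOn_image_iff_integrableOn_abs_det_fderiv_smul volume hms hder hinj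
      (bergFun p α (testF p α w))
    rw [mob_image hw] at hiff
    rw [hiff]
    exact hJ.congr_fun (fun u hu => (hptws u hu).symm) hms
  · have heq := integral_image_eq_integral_abs_det_fderiv_smul volume hms hder hinj
      (bergFun p α (testF p α w))
    rw [mob_image hw] at heq
    rw [heq]
    exact setIntegral_congr_fun hms hEq

end VoltAux
namespace VoltAux

open Complex MeasureTheory ENNReal

lemma J_cont {α : ℝ} : ContinuousOn (fun u : ℂ => (1 - norm u ^ 2) ^ α) uDisc := by
  intro u hu
  have hpos := uDisc_pos hu
  have h1 : ContinuousAt (fun u : ℂ => 1 - norm u ^ 2) u :=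
    (continuous_const.sub ((continuous_norm.pow 2))).continuousAt
  exact (ContinuousAt.comp (g := fun x : ℝ => x ^ α) (f := fun u : ℂ => 1 - norm u ^ 2)
    (Real.continuousAt_rpow_const _ α (Or.inl hpos.ne')) h1).continuousWithinAt

lemma J_integrable {α : ℝ} (hα : -1 < α) :
    IntegrableOn (fun u : ℂ => (1 - norm u ^ 2) ^ α) uDisc volume := by
  have hms : MeasurableSet uDisc := measurableSet_ball
  refine ⟨J_cont.aestronglyMeasurable hms, ?_⟩
  rw [hasFiniteIntegral_def]
  rcases le_or_gt 0 α with hα0 | hα0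
  · -- bounded case
    calc ∫⁻ a in uDisc, (‖(1 - norm a ^ 2) ^ α‖₊ : ℝ≥0∞)
        ≤ ∫⁻ _ in uDisc, (1 : ℝ≥0∞) := by
          apply setLIntegral_mono' hms
          intro x hx
          rw [← enorm_eq_nnnorm, ← ofReal_norm, ← ENNReal.ofReal_one]
          apply ENNReal.ofReal_le_ofReal
          rw [Real.norm_eq_abs, _root_.abs_of_nonneg (Real.rpow_nonneg (uDisc_pos hx).le _)]
          apply Real.rpow_le_one (uDisc_pos hx).le _ hα0
          nlinarith [norm_nonneg x, norm_nonneg x]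
      _ = 1 * volume uDisc := setLIntegral_const _ _
      _ < ⊤ := by
          rw [one_mul]
          exact measure_ball_lt_top
  · -- unbounded case: dyadic annuli
    set b : ℕ → ℝ := fun n => 1 - (2:ℝ)⁻¹ ^ n with hbdef
    set A : ℕ → Set ℂ := fun n => Metric.ball 0 (b (n+1)) \ Metric.ball 0 (b n) with hAdef
    have hb0 : ∀ n, (0:ℝ) ≤ b n := by
      intro n
      have : (2:ℝ)⁻¹ ^ n ≤ 1 := pow_le_one₀ (by norm_num) (by norm_num)
      simp only [hbdef]; linarith
    have hbmono : ∀ n, b n ≤ b (n+1) := by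
      intro n
      have : (2:ℝ)⁻¹ ^ (n+1) ≤ (2:ℝ)⁻¹ ^ n := pow_le_pow_of_le_one (by norm_num) (by norm_num) (by omega)
      simp only [hbdef]; linarith
    have hcover : uDisc ⊆ ⋃ n, A n := by
      intro u hu
      have hu1 : norm u < 1 := mem_uDisc.1 hu
      have hex : ∃ n, norm u < b n := by
        obtain ⟨n, hn⟩ := exists_pow_lt_of_lt_one (by linarith : (0:ℝ) < 1 - norm u)
          (by norm_num : (2:ℝ)⁻¹ < 1)
        exact ⟨n, by simp only [hbdef]; linarith⟩
      have hn0 : Nat.find hex ≠ 0 := by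
        intro h
        have := Nat.find_spec hex
        rw [h] at this
        simp only [hbdef, pow_zero] at this
        nlinarith [norm_nonneg u]
      obtain ⟨m, hm⟩ : ∃ m, Nat.find hex = m + 1 :=
        ⟨Nat.find hex - 1, (Nat.succ_pred_eq_of_pos (Nat.pos_of_ne_zero hn0)).symm⟩
      refine Set.mem_iUnion.2 ⟨m, ?_, ?_⟩
      · rw [Metric.mem_ball, Complex.dist_eq, sub_zero, ← hm]
        exact Nat.find_spec hex
      · intro hmem
        rw [Metric.mem_ball, Complex.dist_eq, sub_zero] at hmem
        exact Nat.find_min hex (by omega) hmem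
    have hcn : ∀ n : ℕ, ∀ u ∈ A n, (‖(1 - norm u ^ 2) ^ α‖₊ : ℝ≥0∞)
        ≤ ENNReal.ofReal (((2:ℝ)⁻¹ ^ (n+1)) ^ α) := by
      intro n u hu
      obtain ⟨hu1, _⟩ := hu
      rw [Metric.mem_ball, Complex.dist_eq, sub_zero] at hu1
      have hx0 : 0 ≤ norm u := norm_nonneg u
      have hplt : (0:ℝ) < (2:ℝ)⁻¹ ^ (n+1) := by positivity
      have hle : (2:ℝ)⁻¹ ^ (n+1) ≤ 1 - norm u ^ 2 := by
        have h2 : norm u < b (n+1) := hu1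
        simp only [hbdef] at h2
        nlinarith
      rw [← enorm_eq_nnnorm, ← ofReal_norm, Real.norm_eq_abs,
        _root_.abs_of_nonneg (Real.rpow_nonneg (by linarith) _)]
      exact ENNReal.ofReal_le_ofReal (Real.rpow_le_rpow_of_nonpos hplt hle hα0.le)
    have hAmeas : ∀ n, MeasurableSet (A n) := fun n =>
      measurableSet_ball.diff measurableSet_ball
    have hmA : ∀ n, volume (A n) ≤ ENNReal.ofReal ((2:ℝ)⁻¹ ^ n) * NNReal.pi := by
      intro n
      have hsub : Metric.ball (0:ℂ) (b n) ⊆ Metric.ball 0 (b (n+1)) :=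
        Metric.ball_subset_ball (hbmono n)
      have hdiff : volume (A n)
          = volume (Metric.ball (0:ℂ) (b (n+1))) - volume (Metric.ball (0:ℂ) (b n)) := by
        rw [hAdef]
        exact measure_diff hsub measurableSet_ball.nullMeasurableSet measure_ball_lt_top.ne
      rw [hdiff, Complex.volume_ball, Complex.volume_ball]
      rw [tsub_le_iff_right, ← add_mul]
      apply mul_le_mul_left _ _
      have hsq : b (n+1) ^ 2 ≤ (2:ℝ)⁻¹ ^ n + b n ^ 2 := by
        have h1 : (0:ℝ) ≤ (2:ℝ)⁻¹ ^ n := by positivity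
        simp only [hbdef, pow_succ]
        nlinarith
      calc ENNReal.ofReal (b (n+1)) ^ 2 = ENNReal.ofReal (b (n+1) ^ 2) := by
            rw [ENNReal.ofReal_pow (hb0 _)]
        _ ≤ ENNReal.ofReal ((2:ℝ)⁻¹ ^ n + b n ^ 2) := ENNReal.ofReal_le_ofReal hsq
        _ = ENNReal.ofReal ((2:ℝ)⁻¹ ^ n) + ENNReal.ofReal (b n ^ 2) := by
            rw [ENNReal.ofReal_add (by positivity) (by positivity)]
        _ = ENNReal.ofReal ((2:ℝ)⁻¹ ^ n) + ENNReal.ofReal (b n) ^ 2 := by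
            rw [ENNReal.ofReal_pow (hb0 _)]
    -- geometric summability
    set q : ℝ≥0∞ := ENNReal.ofReal ((2:ℝ)⁻¹ ^ (1+α)) with hqdef
    have hterm : ∀ n : ℕ, ENNReal.ofReal (((2:ℝ)⁻¹ ^ (n+1)) ^ α) *
        (ENNReal.ofReal ((2:ℝ)⁻¹ ^ n) * NNReal.pi)
        = (ENNReal.ofReal ((2:ℝ)⁻¹ ^ α) * NNReal.pi) * q ^ n := by
      intro n
      have e1 : (((2:ℝ)⁻¹ ^ (n+1)) ^ α) * ((2:ℝ)⁻¹ ^ n)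
          = ((2:ℝ)⁻¹ ^ α) * (((2:ℝ)⁻¹ ^ (1+α)) ^ n) := by
        rw [← Real.rpow_natCast (2:ℝ)⁻¹ (n+1), ← Real.rpow_natCast (2:ℝ)⁻¹ n,
          ← Real.rpow_mul (by norm_num), ← Real.rpow_natCast ((2:ℝ)⁻¹ ^ (1+α)) n,
          ← Real.rpow_mul (by norm_num), ← Real.rpow_add (by norm_num : (0:ℝ) < 2⁻¹),
          ← Real.rpow_add (by norm_num : (0:ℝ) < 2⁻¹)]
        congr 1
        push_cast
        ring
      calc ENNReal.ofReal (((2:ℝ)⁻¹ ^ (n+1)) ^ α) * (ENNReal.ofReal ((2:ℝ)⁻¹ ^ n) * NNReal.pi)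
          = ENNReal.ofReal ((((2:ℝ)⁻¹ ^ (n+1)) ^ α) * ((2:ℝ)⁻¹ ^ n)) * NNReal.pi := by
            rw [ENNReal.ofReal_mul (Real.rpow_nonneg (by positivity) _), mul_assoc]
        _ = ENNReal.ofReal (((2:ℝ)⁻¹ ^ α) * (((2:ℝ)⁻¹ ^ (1+α)) ^ n)) * NNReal.pi := by
            rw [e1]
        _ = (ENNReal.ofReal ((2:ℝ)⁻¹ ^ α) * NNReal.pi) * q ^ n := by
            rw [ENNReal.ofReal_mul (Real.rpow_nonneg (by norm_num) _),
              ENNReal.ofReal_pow (Real.rpow_nonneg (by norm_num) _)]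
            ring
    have hq1 : q < 1 := by
      rw [hqdef, ENNReal.ofReal_lt_one]
      exact Real.rpow_lt_one (by norm_num) (by norm_num) (by linarith)
    calc ∫⁻ a in uDisc, (‖(1 - norm a ^ 2) ^ α‖₊ : ℝ≥0∞)
        ≤ ∫⁻ a in ⋃ n, A n, (‖(1 - norm a ^ 2) ^ α‖₊ : ℝ≥0∞) :=
          lintegral_mono_set hcover
      _ ≤ ∑' n, ∫⁻ a in A n, (‖(1 - norm a ^ 2) ^ α‖₊ : ℝ≥0∞) :=
          lintegral_iUnion_le _ _
      _ ≤ ∑' n, (ENNReal.ofReal ((2:ℝ)⁻¹ ^ α) * NNReal.pi) * q ^ n := by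
          apply ENNReal.tsum_le_tsum
          intro n
          calc ∫⁻ a in A n, (‖(1 - norm a ^ 2) ^ α‖₊ : ℝ≥0∞)
              ≤ ∫⁻ _ in A n, ENNReal.ofReal (((2:ℝ)⁻¹ ^ (n+1)) ^ α) :=
                setLIntegral_mono' (hAmeas n) (hcn n)
            _ = ENNReal.ofReal (((2:ℝ)⁻¹ ^ (n+1)) ^ α) * volume (A n) :=
                setLIntegral_const _ _
            _ ≤ ENNReal.ofReal (((2:ℝ)⁻¹ ^ (n+1)) ^ α) *
                (ENNReal.ofReal ((2:ℝ)⁻¹ ^ n) * NNReal.pi) :=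
                by exact mul_le_mul_right (hmA n) _
            _ = (ENNReal.ofReal ((2:ℝ)⁻¹ ^ α) * NNReal.pi) * q ^ n := hterm n
      _ = (ENNReal.ofReal ((2:ℝ)⁻¹ ^ α) * NNReal.pi) * ∑' n, q ^ n :=
          ENNReal.tsum_mul_left
      _ < ⊤ := by
          rw [ENNReal.tsum_geometric]
          apply ENNReal.mul_lt_top
          · exact ENNReal.mul_lt_top ENNReal.ofReal_lt_top ENNReal.coe_lt_top
          · rw [ENNReal.inv_lt_top]
            exact tsub_pos_of_lt hq1

end VoltAux
namespace VoltAux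

open Complex MeasureTheory Filter Topology

lemma hard_direction {X E : Type} [NormedAddCommGroup X] [NormedSpace ℂ X]
    [NormedAddCommGroup E] [NormedSpace ℂ E]
    (p α : ℝ) (hp : 1 ≤ p) (hα : p - 2 < α)
    (ιX : X →ₗ[ℂ] (ℂ → ℂ)) (hX : RealizesSpace ιX (memBerg p α) (bergNorm p α))
    (ιE : E →ₗ[ℂ] (ℂ → ℂ))
    (hE : RealizesSpace ιE (memHvInf (stdWeight ((2 + α) / p - 1)))
      (hvNorm (stdWeight ((2 + α) / p - 1))))
    (g : ℂ → ℂ) (hg : DifferentiableOn ℂ g uDisc)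
    (T : X →L[ℂ] E) (hT : ∀ x : X, Set.EqOn (ιE (T x)) (volterra g (ιX x)) uDisc)
    (hTc : IsCompactOperator (fun x : X => T x)) :
    vanishBd (fun z => norm (deriv g z)) := by
  have hp0 : 0 < p := lt_of_lt_of_le zero_lt_one hp
  have hα2 : (0:ℝ) < α + 2 := by linarith
  have hα1 : (-1:ℝ) < α := by linarith
  set β : ℝ := (2 + α) / p - 1 with hβdef
  have hβ : 0 < β := by
    have h1 : (1:ℝ) < (2 + α) / p := (one_lt_div hp0).2 (by linarith)
    rw [hβdef]; linarith
  have hβ1 : β + 1 = (α + 2) / p := by rw [hβdef]; ring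
  by_contra hv
  rw [vanishBd] at hv
  push_neg at hv
  obtain ⟨ε₀, hε₀, hseq⟩ := hv
  have hwex : ∀ n : ℕ, ∃ z ∈ uDisc,
      (1 - 1/((n:ℝ)+1)) < norm z ∧ ε₀ ≤ norm (deriv g z) := by
    intro n
    have hle : (0:ℝ) < 1/((n:ℝ)+1) := by positivity
    have h1 : (0:ℝ) ≤ 1 - 1/((n:ℝ)+1) := by
      have : 1/((n:ℝ)+1) ≤ 1 := by
        rw [div_le_one (by positivity)]; linarith [Nat.cast_nonneg (α := ℝ) n]
      linarith
    have h2 : (1 - 1/((n:ℝ)+1)) < 1 := by linarith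
    exact hseq _ h1 h2
  choose w hwD hwabs hwg using hwex
  have hwabs1 : ∀ n, norm (w n) < 1 := fun n => mem_uDisc.1 (hwD n)
  -- A n → 0
  have hAlim : Tendsto (fun n => 1 - norm (w n) ^ 2) atTop (𝓝 0) := by
    have hwlim : Tendsto (fun n => norm (w n)) atTop (𝓝 1) := by
      have hlow : Tendsto (fun n : ℕ => 1 - 1/((n:ℝ)+1)) atTop (𝓝 1) := by
        have := tendsto_one_div_add_atTop_nhds_zero_nat (𝕜 := ℝ)
        have h2 := (tendsto_const_nhds (x := (1:ℝ)) (f := atTop (α := ℕ))).sub this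
        simpa using h2
      apply tendsto_of_tendsto_of_tendsto_of_le_of_le hlow tendsto_const_nhds
        (fun n => (hwabs n).le) (fun n => (hwabs1 n).le)
    have h3 : Tendsto (fun n => norm (w n) ^ 2) atTop (𝓝 (1 ^ 2)) := hwlim.pow 2
    have h4 := (tendsto_const_nhds (x := (1:ℝ)) (f := atTop (α := ℕ))).sub h3
    simpa using h4
  -- test vectors
  have hmem : ∀ n, memBerg p α (testF p α (w n)) := fun n =>
    ⟨testF_diff p α (hwabs1 n), (berg_change p α hp0 hα2 (hwabs1 n) (J_integrable hα1)).1⟩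
  have hxex : ∀ n, ∃ x : X, Set.EqOn (ιX x) (testF p α (w n)) uDisc := fun n =>
    hX.2.2.1 _ (hmem n)
  choose x hx using hxex
  set N : ℝ := (Real.pi⁻¹ * ∫ u in uDisc, (1 - norm u ^ 2) ^ α) ^ (1/p) with hNdef
  have hxnorm : ∀ n, ‖x n‖ = N := by
    intro n
    rw [hX.2.2.2 (x n), bergNorm, hNdef]
    congr 2
    have h1 : ∫ z in uDisc, bergFun p α (ιX (x n)) z
        = ∫ z in uDisc, bergFun p α (testF p α (w n)) z := by
      apply setIntegral_congr_fun measurableSet_ball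
      intro z hz
      rw [bergFun, bergFun, hx n hz]
    rw [h1, (berg_change p α hp0 hα2 (hwabs1 n) (J_integrable hα1)).2]
  -- compactness
  have hcomp : IsCompact (closure ((fun x : X => T x) '' Metric.closedBall 0 (N+1))) := by
    exact IsCompactOperator.isCompact_closure_image_closedBall
      (f := (T : X →ₗ[ℂ] E)) hTc (N+1)
  have hball : ∀ n, x n ∈ Metric.closedBall (0:X) (N+1) := by
    intro n
    rw [Metric.mem_closedBall, dist_zero_right, hxnorm n]
    linarith
  obtain ⟨y, hyK, φ, hφmono, hφlim⟩ := hcomp.tendsto_subseq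
    (fun n => subset_closure (Set.mem_image_of_mem _ (hball n)))
  have hφtop : Tendsto φ atTop atTop := hφmono.tendsto_atTop
  -- limit y is zero
  have hy0 : y = 0 := by
    apply hE.1
    intro z hz
    have hev : Tendsto (fun k => ιE (T (x (φ k))) z) atTop (𝓝 (ιE y z)) := by
      rw [tendsto_iff_dist_tendsto_zero]
      have hwz := stdWeight_pos (β := β) hz
      have h1 : ∀ u : E, dist (ιE u z) (ιE y z) ≤ (stdWeight β z)⁻¹ * ‖u - y‖ := by
        intro u
        rw [Complex.dist_eq]
        have h2 : ιE u z - ιE y z = ιE (u - y) z := by rw [map_sub]; rfl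
        rw [h2]
        have h3 := eval_bound ιE hE (u - y) hz
        calc norm (ιE (u - y) z)
            = (stdWeight β z)⁻¹ * (stdWeight β z * norm (ιE (u - y) z)) := by
              field_simp
          _ ≤ (stdWeight β z)⁻¹ * ‖u - y‖ :=
              mul_le_mul_of_nonneg_left h3 (by positivity)
      have h4 : Tendsto (fun k => (stdWeight β z)⁻¹ * ‖T (x (φ k)) - y‖) atTop (𝓝 0) := by
        have h5 := (hφlim.sub (tendsto_const_nhds (x := y))).norm
        simp only [sub_self, norm_zero] at h5
        have h6 := h5.const_mul (stdWeight β z)⁻¹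
        simpa using h6
      exact squeeze_zero (fun k => dist_nonneg) (fun k => h1 _) h4
    have hval : Tendsto (fun k => ιE (T (x (φ k))) z) atTop (𝓝 0) := by
      -- bound on the segment
      have hz1 : norm z < 1 := mem_uDisc.1 hz
      have hz0 : 0 ≤ norm z := norm_nonneg z
      have hsubz : Metric.closedBall (0:ℂ) (norm z) ⊆ uDisc := by
        intro ζ hζ
        rw [Metric.mem_closedBall, Complex.dist_eq, sub_zero] at hζ
        exact mem_uDisc.2 (lt_of_le_of_lt hζ hz1)
      obtain ⟨Cg, hCg⟩ := (isCompact_closedBall (0:ℂ) (norm z)).exists_bound_of_continuousOn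
        ((derivCont hg).mono hsubz)
      have hCg0 : 0 ≤ Cg := le_trans (norm_nonneg _) (hCg 0 (Metric.mem_closedBall_self hz0))
      set c : ℝ := (α + 2) / p with hcdef
      have hc0 : 0 < c := by rw [hcdef]; positivity
      set Kz : ℝ := (1 - norm z) ^ (-2*(α+2)/p) * Cg with hKzdef
      have hKz0 : 0 ≤ Kz := by
        rw [hKzdef]
        exact mul_nonneg (Real.rpow_nonneg (by linarith) _) hCg0
      have hbd : ∀ n, norm (ιE (T (x n)) z)
          ≤ (1 - norm (w n) ^ 2) ^ c * Kz := by
        intro n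
        rw [hT (x n) hz, volterra_congr (hx n) hz]
        apply volterra_abs_le hz
        intro t ht0 ht1
        have htz : (t:ℂ) * z ∈ uDisc := smul_mem_uDisc hz ht0 ht1
        have htz1 : norm ((t:ℂ) * z) ≤ norm z := by
          rw [norm_mul, Complex.norm_real, Real.norm_eq_abs, _root_.abs_of_nonneg ht0]
          nlinarith [norm_nonneg z]
        have h1 := testF_pointwise_bound p α hp0 hα2 (hwabs1 n) (mem_uDisc.1 htz)
        have h2 : (1 - norm ((t:ℂ)*z)) ^ (-2*(α+2)/p)
            ≤ (1 - norm z) ^ (-2*(α+2)/p) := by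
          apply Real.rpow_le_rpow_of_nonpos (by linarith) (by linarith)
          apply div_nonpos_of_nonpos_of_nonneg (by linarith) hp0.le
        have h3 : norm (deriv g ((t:ℂ)*z)) ≤ Cg := by
          have := hCg ((t:ℂ)*z) (by
            rw [Metric.mem_closedBall, Complex.dist_eq, sub_zero]; exact htz1)
          exact this
        rw [norm_mul]
        have hAn : (0:ℝ) < 1 - norm (w n) ^ 2 := by
          nlinarith [norm_nonneg (w n), hwabs1 n]
        calc norm (testF p α (w n) ((t:ℂ)*z)) * norm (deriv g ((t:ℂ)*z))
            ≤ ((1 - norm (w n) ^ 2) ^ c * (1 - norm ((t:ℂ)*z)) ^ (-2*(α+2)/p))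
              * Cg := by
              apply mul_le_mul (by rw [hcdef]; exact h1) h3 (norm_nonneg _)
              exact mul_nonneg (Real.rpow_nonneg hAn.le _)
                (Real.rpow_nonneg (by linarith) _)
          _ ≤ (1 - norm (w n) ^ 2) ^ c * Kz := by
              rw [hKzdef, ← mul_assoc]
              apply mul_le_mul_of_nonneg_right _ hCg0
              apply mul_le_mul_of_nonneg_left h2 (Real.rpow_nonneg hAn.le _)
      -- RHS tends to zero
      have hrhs : Tendsto (fun k => (1 - norm (w (φ k)) ^ 2) ^ c * Kz) atTop (𝓝 0) := by
        have h5 : Tendsto (fun n => (1 - norm (w n) ^ 2) ^ c) atTop (𝓝 0) := by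
          have h6 := (Real.continuousAt_rpow_const 0 c (Or.inr hc0.le)).tendsto.comp hAlim
          rwa [Real.zero_rpow hc0.ne'] at h6
        have h7 := (h5.comp hφtop).mul_const Kz
        simpa using h7
      rw [tendsto_zero_iff_norm_tendsto_zero]
      exact squeeze_zero (fun k => norm_nonneg _) (fun k => hbd (φ k)) hrhs
    have := tendsto_nhds_unique hev hval
    show ιE y z = ιE 0 z
    rw [map_zero, this]
    rfl
  -- lower bound on ‖T (x n)‖
  have h4pos : (0:ℝ) < 4 ^ (β+1) := Real.rpow_pos_of_pos (by norm_num) _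
  have hlow : ∀ n, ε₀ / 4 ^ (β+1) ≤ ‖T (x n)‖ := by
    intro n
    have hder : deriv (ιE (T (x n))) (w n) = testF p α (w n) (w n) * deriv g (w n) := by
      have heq : ιE (T (x n)) =ᶠ[𝓝 (w n)] volterra g (ιX (x n)) :=
        Filter.eventuallyEq_of_mem (isOpen_uDisc.mem_nhds (hwD n)) (hT (x n))
      rw [heq.deriv_eq, (hasDerivAt_volterra hg (hX.2.1 (x n)).1 (hwD n)).deriv,
        hx n (hwD n)]
    have hd := deriv_bound hβ ιE hE (T (x n)) (hwD n)
    have hval2 : ε₀ ≤ (1 - norm (w n) ^ 2) ^ (β+1)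
        * norm (deriv (ιE (T (x n))) (w n)) := by
      rw [hder, norm_mul, ← mul_assoc, hβ1, testF_at_self p α hp0 (hwabs1 n), one_mul]
      exact hwg n
    rw [div_le_iff₀ h4pos]
    calc ε₀ ≤ (1 - norm (w n) ^ 2) ^ (β+1)
          * norm (deriv (ιE (T (x n))) (w n)) := hval2
      _ ≤ 4 ^ (β+1) * ‖T (x n)‖ := hd
      _ = ‖T (x n)‖ * 4 ^ (β+1) := mul_comm _ _
  -- contradiction
  have hTnorm : Tendsto (fun k => ‖T (x (φ k))‖) atTop (𝓝 0) := by
    rw [hy0] at hφlim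
    have := hφlim.norm
    simpa using this
  have hge : ε₀ / 4 ^ (β+1) ≤ 0 :=
    ge_of_tendsto hTnorm (Filter.Eventually.of_forall (fun k => hlow (φ k)))
  have : (0:ℝ) < ε₀ / 4 ^ (β+1) := div_pos hε₀ h4pos
  linarith

end VoltAux
/-- For `1 ≤ p < ∞`, `p - 2 < α` and `β = (2+α)/p - 1`, the Volterra
operator `T_g : A_α^p → H_{v_β}^∞` is compact iff `lim_{|z|→1} |g'(z)| = 0`, iff `g` is
constant on `𝔻`, iff `T_g = 0`. -/
theorem volterra_Bergman_compact_iff_zero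
    {X E : Type} [NormedAddCommGroup X] [NormedSpace ℂ X] [CompleteSpace X]
    [NormedAddCommGroup E] [NormedSpace ℂ E] [CompleteSpace E]
    (p α : ℝ) (hp : 1 ≤ p) (hα : p - 2 < α)
    (ιX : X →ₗ[ℂ] (ℂ → ℂ)) (hX : RealizesSpace ιX (memBerg p α) (bergNorm p α))
    (ιE : E →ₗ[ℂ] (ℂ → ℂ))
    (hE : RealizesSpace ιE (memHvInf (stdWeight ((2 + α) / p - 1)))
      (hvNorm (stdWeight ((2 + α) / p - 1))))
    (g : ℂ → ℂ) (hg : DifferentiableOn ℂ g uDisc) :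
    ((∃ T : X →L[ℂ] E, (∀ x : X, Set.EqOn (ιE (T x)) (volterra g (ιX x)) uDisc) ∧
        IsCompactOperator (fun x : X => T x)) ↔
      vanishBd (fun z => ‖deriv g z‖)) ∧
    (vanishBd (fun z => ‖deriv g z‖) ↔ ∀ z ∈ uDisc, ∀ w ∈ uDisc, g z = g w) ∧
    ((∃ T : X →L[ℂ] E, (∀ x : X, Set.EqOn (ιE (T x)) (volterra g (ιX x)) uDisc) ∧
        IsCompactOperator (fun x : X => T x)) ↔
      ∀ f : ℂ → ℂ, DifferentiableOn ℂ f uDisc → ∀ z ∈ uDisc, volterra g f z = 0) := by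

  have hp0 : 0 < p := lt_of_lt_of_le zero_lt_one hp
  have hzero : (∀ z ∈ uDisc, deriv g z = 0) →
      ∃ T : X →L[ℂ] E, (∀ x : X, Set.EqOn (ιE (T x)) (volterra g (ιX x)) uDisc) ∧
        IsCompactOperator (fun x : X => T x) := by
    intro h0
    refine ⟨0, fun x z hz => ?_, ?_⟩
    · show ιE ((0 : X →L[ℂ] E) x) z = volterra g (ιX x) z
      rw [ContinuousLinearMap.zero_apply, map_zero,
        VoltAux.volterra_eq_zero h0 (ιX x) hz]
      rfl
    · have heq : (fun x : X => (0 : X →L[ℂ] E) x) = (0 : X → E) := by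
        ext x; simp
      rw [heq]
      exact isCompactOperator_zero
  have hPtoV : (∃ T : X →L[ℂ] E, (∀ x : X, Set.EqOn (ιE (T x)) (volterra g (ιX x)) uDisc) ∧
      IsCompactOperator (fun x : X => T x)) →
      vanishBd (fun z => norm (deriv g z)) := by
    rintro ⟨T, hT, hTc⟩
    exact VoltAux.hard_direction p α hp hα ιX hX ιE hE g hg T hT hTc
  have hVto0 : vanishBd (fun z => norm (deriv g z)) → ∀ z ∈ uDisc, deriv g z = 0 :=
    VoltAux.deriv_zero_of_vanishBd hg
  have h0toV : (∀ z ∈ uDisc, deriv g z = 0) →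
      vanishBd (fun z => norm (deriv g z)) := by
    intro h0 ε hε
    exact ⟨0, le_refl 0, zero_lt_one, fun z hz _ => by
      show norm (deriv g z) < ε
      rw [h0 z hz]; simpa using hε⟩
  refine ⟨⟨hPtoV, fun hv => hzero (hVto0 hv)⟩,
    ⟨fun hv => VoltAux.const_of_deriv_zero hg (hVto0 hv),
      fun hc => h0toV (VoltAux.deriv_zero_of_const hc)⟩,
    ⟨fun hP f hf z hz => VoltAux.volterra_eq_zero (hVto0 (hPtoV hP)) f hz, ?_⟩⟩
  intro hZ
  refine ⟨0, fun x z hz => ?_, ?_⟩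
  · show ιE ((0 : X →L[ℂ] E) x) z = volterra g (ιX x) z
    rw [ContinuousLinearMap.zero_apply, map_zero, hZ (ιX x) (hX.2.1 x).1 z hz]
    rfl
  · have heq : (fun x : X => (0 : X →L[ℂ] E) x) = (0 : X → E) := by
      ext x; simp
    rw [heq]
    exact isCompactOperator_zero
end
end

section
/- Let φ be an analytic selfmap of 𝔻, g ∈ H(𝔻), and let v be a normal weight. If g∘φ ∈ H_v^0, then T_g^φ(f_r) ∈ H_v^0 for every f ∈ H(𝔻) and every 0 < r < 1, where f_r(z) = f(rz). Likewise, for any weight v, if g∘φ ∈ B_v^0 then T_g^φ(f_r) ∈ B_v^0 for every f ∈ H(𝔻) and 0 < r < 1. -/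
noncomputable section

open Complex MeasureTheory Metric Set Filter Topology

section Aux

lemma mem_uDisc {z : ℂ} : z ∈ uDisc ↔ ‖z‖ < 1 := by
  simp [uDisc, Metric.mem_ball, Complex.dist_eq, sub_zero]

lemma uDisc_open : IsOpen uDisc := Metric.isOpen_ball

lemma ofReal_mem_uDisc {r : ℝ} (h0 : 0 ≤ r) (h1 : r < 1) : ((r : ℝ) : ℂ) ∈ uDisc := by
  rw [mem_uDisc, Complex.norm_real, Real.norm_eq_abs, _root_.abs_of_nonneg h0]; exact h1

lemma smul_mem_uDisc {t : ℝ} {z : ℂ} (ht0 : 0 ≤ t) (ht1 : t ≤ 1) (hz : z ∈ uDisc) :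
    ((t : ℂ) * z) ∈ uDisc := by
  rw [mem_uDisc] at hz ⊢
  rw [norm_mul, Complex.norm_real, Real.norm_eq_abs, _root_.abs_of_nonneg ht0]
  calc t * ‖z‖ ≤ 1 * ‖z‖ := by
        exact mul_le_mul_of_nonneg_right ht1 (norm_nonneg z)
    _ < 1 := by simpa using hz

lemma deriv_differentiableOn {f : ℂ → ℂ} (hf : DifferentiableOn ℂ f uDisc) :
    DifferentiableOn ℂ (deriv f) uDisc :=
  ((hf.analyticOnNhd uDisc_open).deriv).differentiableOn

lemma deriv_continuousOn {f : ℂ → ℂ} (hf : DifferentiableOn ℂ f uDisc) :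
    ContinuousOn (deriv f) uDisc :=
  (deriv_differentiableOn hf).continuousOn

/-- A function vanishing at the boundary and continuous on the disc has bounded image. -/
lemma bddAbove_image_of_vanishBd {F : ℂ → ℝ} (hc : ContinuousOn F uDisc) (hv : vanishBd F) :
    BddAbove (F '' uDisc) := by
  obtain ⟨s, hs0, hs1, hs⟩ := hv 1 one_pos
  have hsub : Metric.closedBall (0 : ℂ) s ⊆ uDisc := by
    intro x hx
    rw [Metric.mem_closedBall, Complex.dist_eq, sub_zero] at hx
    exact mem_uDisc.2 (lt_of_le_of_lt hx hs1)
  obtain ⟨B, hB⟩ := (isCompact_closedBall (0 : ℂ) s).exists_bound_of_continuousOn (hc.mono hsub)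
  refine ⟨max B 1, ?_⟩
  rintro _ ⟨z, hz, rfl⟩
  rcases le_or_gt (‖z‖) s with h | h
  · have : z ∈ Metric.closedBall (0 : ℂ) s := by
      rw [Metric.mem_closedBall, Complex.dist_eq, sub_zero]; exact h
    exact le_trans (le_trans (le_abs_self _) (hB z this)) (le_max_left _ _)
  · exact le_trans (le_of_lt (hs z hz h)) (le_max_right _ _)

lemma hasDerivAt_mul_H {H : ℂ → ℂ} (hH : DifferentiableOn ℂ H uDisc) (c : ℂ) {y : ℂ}
    (hyc : y * c ∈ uDisc) :
    HasDerivAt (fun ζ : ℂ => ζ * H (ζ * c)) (H (y * c) + y * (deriv H (y * c) * c)) y := by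
  have hin : HasDerivAt (fun ζ : ℂ => ζ * c) (1 * c) y := (hasDerivAt_id y).mul_const c
  have hout : HasDerivAt H (deriv H (y * c)) (y * c) :=
    (hH.differentiableAt (uDisc_open.mem_nhds hyc)).hasDerivAt
  have h1 : HasDerivAt (fun ζ : ℂ => H (ζ * c)) (deriv H (y * c) * (1 * c)) y := hout.comp y hin
  have h2 := (hasDerivAt_id y).mul h1
  refine h2.congr_deriv ?_
  simp only [id_eq]; ring

lemma contOn_scaled {G : ℂ → ℂ} (hG : ContinuousOn G uDisc) {x : ℂ} (hx : ‖x‖ < 1)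
    {s : Set ℝ} (hs : s ⊆ Set.Icc 0 1) : ContinuousOn (fun t : ℝ => G (x * (t : ℂ))) s := by
  refine hG.comp ((continuous_const.mul Complex.continuous_ofReal).continuousOn) ?_
  intro t ht
  have h := hs ht
  show x * (t : ℂ) ∈ uDisc
  rw [mul_comm]
  exact smul_mem_uDisc h.1 h.2 (mem_uDisc.2 hx)

lemma hasDerivAt_volterraCore {H : ℂ → ℂ} (hH : DifferentiableOn ℂ H uDisc)
    {w : ℂ} (hw : w ∈ uDisc) :
    HasDerivAt (fun x : ℂ => x * ∫ t in (0:ℝ)..1, H ((t : ℂ) * x)) (H w) w := by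
  have hw1 : ‖w‖ < 1 := mem_uDisc.1 hw
  set ρ : ℝ := (1 + ‖w‖) / 2 with hρdef
  have hρ1 : ρ < 1 := by rw [hρdef]; linarith
  have hwρ : ‖w‖ < ρ := by rw [hρdef]; linarith
  have hρ0 : 0 < ρ := lt_of_le_of_lt (norm_nonneg w) hwρ
  set ε := ρ - ‖w‖ with hεdef
  have hε0 : 0 < ε := sub_pos.2 hwρ
  have hball : ∀ x ∈ Metric.ball w ε, ‖x‖ < ρ := by
    intro x hx
    rw [Metric.mem_ball, Complex.dist_eq] at hx
    calc ‖x‖ = ‖x - w + w‖ := by ring_nf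
      _ ≤ ‖x - w‖ + ‖w‖ := norm_add_le _ _
      _ < ε + ‖w‖ := by linarith
      _ = ρ := by rw [hεdef]; ring
  -- membership of scaled points
  have hmem : ∀ (x : ℂ), ‖x‖ < 1 → ∀ t : ℝ, 0 ≤ t → t ≤ 1 → x * (t : ℂ) ∈ uDisc := by
    intro x hx t ht0 ht1
    rw [mul_comm]; exact smul_mem_uDisc ht0 ht1 (mem_uDisc.2 hx)
  -- bounds for H and deriv H on the closed ball of radius ρ
  have hKsub : Metric.closedBall (0 : ℂ) ρ ⊆ uDisc := by
    intro x hx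
    rw [Metric.mem_closedBall, Complex.dist_eq, sub_zero] at hx
    exact mem_uDisc.2 (lt_of_le_of_lt hx hρ1)
  obtain ⟨C₀, hC₀⟩ := (isCompact_closedBall (0 : ℂ) ρ).exists_bound_of_continuousOn
    (hH.continuousOn.mono hKsub)
  obtain ⟨C₁, hC₁⟩ := (isCompact_closedBall (0 : ℂ) ρ).exists_bound_of_continuousOn
    ((deriv_continuousOn hH).mono hKsub)
  have hKmem : ∀ (x : ℂ), ‖x‖ < ρ → ∀ t : ℝ, 0 ≤ t → t ≤ 1 →
      x * (t : ℂ) ∈ Metric.closedBall (0 : ℂ) ρ := by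
    intro x hx t ht0 ht1
    rw [Metric.mem_closedBall, Complex.dist_eq, sub_zero, norm_mul, Complex.norm_real, Real.norm_eq_abs,
      _root_.abs_of_nonneg ht0]
    calc ‖x‖ * t ≤ ‖x‖ * 1 :=
          mul_le_mul_of_nonneg_left ht1 (norm_nonneg x)
      _ ≤ ρ := by rw [mul_one]; exact hx.le
  set F' : ℂ → ℝ → ℂ := fun x t => H (x * (t : ℂ)) + x * (deriv H (x * (t : ℂ)) * (t : ℂ))
    with hF'def
  have huIoc : Set.uIoc (0:ℝ) 1 ⊆ Set.Icc (0:ℝ) 1 := by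
    rw [Set.uIoc_of_le zero_le_one]; exact Set.Ioc_subset_Icc_self
  have huIcc : Set.uIcc (0:ℝ) 1 ⊆ Set.Icc (0:ℝ) 1 := by
    rw [Set.uIcc_of_le zero_le_one]
  -- apply differentiation under the integral sign
  have hF_meas : ∀ᶠ x in nhds w, AEStronglyMeasurable (fun t : ℝ => x * H (x * (t : ℂ)))
      (MeasureTheory.volume.restrict (Set.uIoc (0:ℝ) 1)) := by
    refine Filter.eventually_of_mem (Metric.ball_mem_nhds w hε0) ?_
    intro x hx
    exact ((continuousOn_const.mul
      (contOn_scaled hH.continuousOn (lt_trans (hball x hx) hρ1) huIoc))).aestronglyMeasurable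
      measurableSet_uIoc
  have hF_int : IntervalIntegrable (fun t : ℝ => w * H (w * (t : ℂ)))
      MeasureTheory.volume 0 1 :=
    (continuousOn_const.mul (contOn_scaled hH.continuousOn hw1 huIcc)).intervalIntegrable
  have hF'cont : ContinuousOn (F' w) (Set.Icc (0:ℝ) 1) := by
    refine ContinuousOn.add (contOn_scaled hH.continuousOn hw1 le_rfl) ?_
    exact continuousOn_const.mul ((contOn_scaled (deriv_continuousOn hH) hw1 le_rfl).mul
      (Complex.continuous_ofReal.continuousOn))
  have hF'_meas : AEStronglyMeasurable (F' w)
      (MeasureTheory.volume.restrict (Set.uIoc (0:ℝ) 1)) :=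
    (hF'cont.mono huIoc).aestronglyMeasurable measurableSet_uIoc
  have h_bound : ∀ᵐ t ∂MeasureTheory.volume, t ∈ Set.uIoc (0:ℝ) 1 →
      ∀ x ∈ Metric.ball w ε, ‖F' x t‖ ≤ C₀ + C₁ := by
    refine MeasureTheory.ae_of_all _ ?_
    intro t ht x hx
    have ht' := huIoc ht
    have hK := hKmem x (hball x hx) t ht'.1 ht'.2
    have h0 : ‖H (x * (t:ℂ))‖ ≤ C₀ := hC₀ _ hK
    have h1 : ‖deriv H (x * (t:ℂ))‖ ≤ C₁ := hC₁ _ hK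
    calc ‖F' x t‖ ≤ ‖H (x * (t:ℂ))‖ + ‖x * (deriv H (x * (t:ℂ)) * (t:ℂ))‖ := norm_add_le _ _
      _ ≤ C₀ + C₁ := by
          refine add_le_add h0 ?_
          rw [norm_mul, norm_mul]
          have hx1 : ‖x‖ ≤ 1 := by
            exact (lt_trans (hball x hx) hρ1).le
          have ht1 : ‖((t:ℝ) : ℂ)‖ ≤ 1 := by
            rw [Complex.norm_real, Real.norm_eq_abs, _root_.abs_of_nonneg ht'.1]; exact ht'.2
          have hC₁0 : 0 ≤ C₁ := le_trans (norm_nonneg _) h1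
          calc ‖x‖ * (‖deriv H (x * (t:ℂ))‖ * ‖((t:ℝ):ℂ)‖)
              ≤ 1 * (C₁ * 1) := by
                refine mul_le_mul hx1 (mul_le_mul h1 ht1 (norm_nonneg _) hC₁0) ?_ one_pos.le
                positivity
            _ = C₁ := by ring
  have h_diff : ∀ᵐ t ∂MeasureTheory.volume, t ∈ Set.uIoc (0:ℝ) 1 →
      ∀ x ∈ Metric.ball w ε, HasDerivAt (fun x => x * H (x * (t : ℂ))) (F' x t) x := by
    refine MeasureTheory.ae_of_all _ ?_
    intro t ht x hx
    have ht' := huIoc ht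
    exact hasDerivAt_mul_H hH ((t:ℝ):ℂ) (hmem x (lt_trans (hball x hx) hρ1) t ht'.1 ht'.2)
  obtain ⟨-, key⟩ := intervalIntegral.hasDerivAt_integral_of_dominated_loc_of_deriv_le (Metric.ball_mem_nhds w hε0)
    hF_meas hF_int hF'_meas h_bound (intervalIntegrable_const) h_diff
  -- compute the value of the integral of F' w
  have hψ : ∀ t ∈ Set.uIcc (0:ℝ) 1,
      HasDerivAt (fun t : ℝ => (t : ℂ) * H ((t : ℂ) * w)) (F' w t) t := by
    intro t ht
    have ht' := huIcc ht
    have h := (hasDerivAt_mul_H hH w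
      (by rw [mul_comm]; exact hmem w hw1 t ht'.1 ht'.2)).comp_ofReal (z := t)
    have heq : F' w t = H ((t:ℂ) * w) + (t:ℂ) * (deriv H ((t:ℂ) * w) * w) := by
      simp only [hF'def]; rw [mul_comm w ((t:ℝ):ℂ)]; ring
    rw [heq]; exact h
  have hψint : IntervalIntegrable (F' w) MeasureTheory.volume 0 1 :=
    (hF'cont.mono huIcc).intervalIntegrable
  have hval : (∫ t in (0:ℝ)..1, F' w t) = H w := by
    rw [intervalIntegral.integral_eq_sub_of_hasDerivAt hψ hψint]
    simp
  rw [hval] at key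
  have hfun : (fun x : ℂ => x * ∫ t in (0:ℝ)..1, H ((t : ℂ) * x)) =
      (fun x : ℂ => ∫ t in (0:ℝ)..1, x * H (x * (t : ℂ))) := by
    funext x
    rw [intervalIntegral.integral_const_mul]
    congr 1
    apply intervalIntegral.integral_congr
    intro t _
    show H ((t:ℂ) * x) = H (x * (t:ℂ))
    rw [mul_comm ((t:ℝ):ℂ) x]
  rw [hfun]
  exact key

lemma hasDerivAt_genVolterra {g φ F : ℂ → ℂ} (hg : DifferentiableOn ℂ g uDisc)
    (hφ : IsSelfMap φ) (hF : DifferentiableOn ℂ F uDisc) {z : ℂ} (hz : z ∈ uDisc) :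
    HasDerivAt (genVolterra g φ F) ((F (φ z) * deriv g (φ z)) * deriv φ z) z := by
  have hH : DifferentiableOn ℂ (fun ξ => F ξ * deriv g ξ) uDisc :=
    hF.mul (deriv_differentiableOn hg)
  have hφz : HasDerivAt φ (deriv φ z) z :=
    (hφ.1.differentiableAt (uDisc_open.mem_nhds hz)).hasDerivAt
  have hG := hasDerivAt_volterraCore hH (hφ.2 hz)
  exact hG.comp z hφz

lemma hasDerivAt_comp_selfmap {g φ : ℂ → ℂ} (hg : DifferentiableOn ℂ g uDisc)
    (hφ : IsSelfMap φ) {z : ℂ} (hz : z ∈ uDisc) :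
    HasDerivAt (fun z => g (φ z)) (deriv g (φ z) * deriv φ z) z := by
  have hφz : HasDerivAt φ (deriv φ z) z :=
    (hφ.1.differentiableAt (uDisc_open.mem_nhds hz)).hasDerivAt
  exact ((hg.differentiableAt (uDisc_open.mem_nhds (hφ.2 hz))).hasDerivAt).comp z hφz

lemma genVolterra_differentiableOn {g φ F : ℂ → ℂ} (hg : DifferentiableOn ℂ g uDisc)
    (hφ : IsSelfMap φ) (hF : DifferentiableOn ℂ F uDisc) :
    DifferentiableOn ℂ (genVolterra g φ F) uDisc := fun z hz =>
  ((hasDerivAt_genVolterra hg hφ hF hz).differentiableAt).differentiableWithinAt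

lemma deriv_genVolterra {g φ F : ℂ → ℂ} (hg : DifferentiableOn ℂ g uDisc)
    (hφ : IsSelfMap φ) (hF : DifferentiableOn ℂ F uDisc) {z : ℂ} (hz : z ∈ uDisc) :
    deriv (genVolterra g φ F) z = (F (φ z) * deriv g (φ z)) * deriv φ z :=
  (hasDerivAt_genVolterra hg hφ hF hz).deriv

lemma deriv_comp_selfmap {g φ : ℂ → ℂ} (hg : DifferentiableOn ℂ g uDisc)
    (hφ : IsSelfMap φ) {z : ℂ} (hz : z ∈ uDisc) :
    deriv (fun z => g (φ z)) z = deriv g (φ z) * deriv φ z :=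
  (hasDerivAt_comp_selfmap hg hφ hz).deriv

lemma dil_differentiableOn {f : ℂ → ℂ} (hf : DifferentiableOn ℂ f uDisc) {r : ℝ}
    (hr0 : 0 < r) (hr1 : r < 1) : DifferentiableOn ℂ (dil r f) uDisc := by
  refine DifferentiableOn.comp hf ?_ ?_
  · exact (differentiable_const ((r:ℝ):ℂ)).mul differentiable_id |>.differentiableOn
  · intro ζ hζ
    exact smul_mem_uDisc hr0.le hr1.le hζ

lemma dil_bound {f : ℂ → ℂ} (hf : ContinuousOn f uDisc) {r : ℝ}
    (hr0 : 0 < r) (hr1 : r < 1) :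
    ∃ M : ℝ, 0 ≤ M ∧ ∀ ζ ∈ uDisc, ‖dil r f ζ‖ ≤ M := by
  have hKsub : Metric.closedBall (0 : ℂ) r ⊆ uDisc := by
    intro x hx
    rw [Metric.mem_closedBall, Complex.dist_eq, sub_zero] at hx
    exact mem_uDisc.2 (lt_of_le_of_lt hx hr1)
  obtain ⟨C, hC⟩ := (isCompact_closedBall (0 : ℂ) r).exists_bound_of_continuousOn
    (hf.mono hKsub)
  refine ⟨max C 0, le_max_right _ _, ?_⟩
  intro ζ hζ
  have hmem : ((r:ℝ):ℂ) * ζ ∈ Metric.closedBall (0 : ℂ) r := by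
    rw [Metric.mem_closedBall, Complex.dist_eq, sub_zero, norm_mul, Complex.norm_real, Real.norm_eq_abs,
      _root_.abs_of_nonneg hr0.le]
    calc r * ‖ζ‖ ≤ r * 1 :=
          mul_le_mul_of_nonneg_left (mem_uDisc.1 hζ).le hr0.le
      _ = r := mul_one r
  calc ‖dil r f ζ‖ = ‖f (((r:ℝ):ℂ) * ζ)‖ := rfl
    _ ≤ C := hC _ hmem
    _ ≤ max C 0 := le_max_left _ _

lemma exists_dyadic {d : ℝ} (h0 : 0 < d) (h1 : d ≤ 1) :
    ∃ N : ℕ, (2:ℝ) ^ (-(N:ℤ) - 1) < d ∧ d ≤ (2:ℝ) ^ (-(N:ℤ)) := by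
  have hex : ∃ n : ℕ, (2:ℝ) ^ (-(n:ℤ) - 1) < d := by
    obtain ⟨n, hn⟩ := exists_pow_lt_of_lt_one h0 (by norm_num : (1:ℝ)/2 < 1)
    refine ⟨n, lt_of_le_of_lt ?_ hn⟩
    have : ((1:ℝ)/2) ^ n = (2:ℝ) ^ (-(n:ℤ)) := by
      rw [one_div, inv_pow, ← zpow_natCast, ← zpow_neg]
    rw [this]
    exact zpow_le_zpow_right₀ one_le_two (by linarith)
  classical
  set N := Nat.find hex with hNdef
  refine ⟨N, Nat.find_spec hex, ?_⟩
  rcases Nat.eq_zero_or_pos N with h | h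
  · rw [h]; simpa using h1
  · have hmin := Nat.find_min hex (show N - 1 < N by omega)
    push_neg at hmin
    have : (-(((N:ℕ) - 1 : ℕ) : ℤ) - 1) = -(N:ℤ) := by omega
    rwa [this] at hmin

/-- The weight as a function of the radius. -/
def vr (v : ℂ → ℝ) (s : ℝ) : ℝ := v ((s : ℝ) : ℂ)

/-- The dyadic weight sequence `v(1 - 2^(-n))`. -/
def wseq (v : ℂ → ℝ) (n : ℕ) : ℝ := vr v (1 - (2:ℝ) ^ (-(n:ℤ)))

lemma dyadic_radius_mem {n : ℕ} :
    0 ≤ 1 - (2:ℝ) ^ (-(n:ℤ)) ∧ 1 - (2:ℝ) ^ (-(n:ℤ)) < 1 := by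
  have h1 : (0:ℝ) < (2:ℝ) ^ (-(n:ℤ)) := zpow_pos two_pos _
  have h2 : (2:ℝ) ^ (-(n:ℤ)) ≤ 1 := by
    have := zpow_le_zpow_right₀ (one_le_two (α := ℝ)) (by omega : -(n:ℤ) ≤ 0)
    simpa using this
  constructor <;> linarith

lemma vr_pos {v : ℂ → ℝ} (hv : IsNormalWeight v) {s : ℝ} (h0 : 0 ≤ s) (h1 : s < 1) :
    0 < vr v s := hv.1.2.1 _ (ofReal_mem_uDisc h0 h1)

lemma wseq_pos {v : ℂ → ℝ} (hv : IsNormalWeight v) (n : ℕ) : 0 < wseq v n :=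
  vr_pos hv dyadic_radius_mem.1 dyadic_radius_mem.2

lemma vr_anti {v : ℂ → ℝ} (hv : IsNormalWeight v) {r s : ℝ} (h0 : 0 ≤ r) (hrs : r ≤ s)
    (h1 : s < 1) : vr v s ≤ vr v r := hv.2.2.1 r s h0 hrs h1

lemma wseq_anti {v : ℂ → ℝ} (hv : IsNormalWeight v) {m n : ℕ} (h : m ≤ n) :
    wseq v n ≤ wseq v m := by
  refine vr_anti hv dyadic_radius_mem.1 ?_ dyadic_radius_mem.2
  have : (2:ℝ) ^ (-(n:ℤ)) ≤ (2:ℝ) ^ (-(m:ℤ)) :=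
    zpow_le_zpow_right₀ one_le_two (by omega)
  linarith

lemma wseq_step {v : ℂ → ℝ} (hv : IsNormalWeight v) :
    ∃ M : ℝ, 1 ≤ M ∧ ∀ n : ℕ, wseq v n ≤ M * wseq v (n+1) := by
  obtain ⟨M₀, hM₀⟩ := hv.2.2.2.2
  refine ⟨max M₀ 1, le_max_right _ _, ?_⟩
  intro n
  have h := hM₀ n
  have hcast : (-(n:ℤ) - 1) = (-((n+1 : ℕ) : ℤ)) := by push_cast; ring
  rw [hcast] at h
  have hp := wseq_pos hv (n+1)
  have h' : wseq v n / wseq v (n+1) ≤ M₀ := h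
  calc wseq v n = (wseq v n / wseq v (n+1)) * wseq v (n+1) := by field_simp
    _ ≤ max M₀ 1 * wseq v (n+1) := by
        exact mul_le_mul_of_nonneg_right (le_trans h' (le_max_left _ _)) hp.le

lemma wseq_geom {v : ℂ → ℝ} (hv : IsNormalWeight v) :
    ∃ (k : ℕ) (c : ℝ) (N₀ : ℕ), 1 ≤ k ∧ 0 ≤ c ∧ c < 1 ∧
      ∀ n, N₀ ≤ n → wseq v (n+k) ≤ c * wseq v n := by
  obtain ⟨k, hk1, hlim⟩ := hv.2.2.2.1
  have hfun : (fun n : ℕ =>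
      v ((((1 : ℝ) - (2 : ℝ) ^ (-(n : ℤ) - (k : ℤ)) : ℝ) : ℂ)) /
      v ((((1 : ℝ) - (2 : ℝ) ^ (-(n : ℤ)) : ℝ) : ℂ))) =
      (fun n : ℕ => wseq v (n+k) / wseq v n) := by
    funext n
    have : (-(n:ℤ) - (k:ℤ)) = (-((n+k : ℕ) : ℤ)) := by push_cast; ring
    rw [this]; rfl
  rw [hfun] at hlim
  set u : ℕ → ℝ := fun n => wseq v (n+k) / wseq v n with hu
  have hu1 : ∀ n, u n ≤ 1 := by
    intro n
    exact div_le_one_of_le₀ (wseq_anti hv (Nat.le_add_right n k)) (wseq_pos hv n).le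
  have hbdd : Filter.IsBoundedUnder (· ≤ ·) Filter.atTop u :=
    Filter.isBoundedUnder_of ⟨1, hu1⟩
  set L := Filter.limsup u Filter.atTop with hL
  set c := (max L 0 + 1)/2 with hc
  have hmax1 : max L 0 < 1 := by
    rw [max_lt_iff]; exact ⟨hlim, one_pos⟩
  have hLc : L < c := by
    have := le_max_left L 0
    rw [hc]; linarith
  have hev := Filter.eventually_lt_of_limsup_lt hLc hbdd
  rw [Filter.eventually_atTop] at hev
  obtain ⟨N₀, hN₀⟩ := hev
  refine ⟨k, c, N₀, hk1, by positivity, by rw [hc]; linarith, ?_⟩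
  intro n hn
  have := hN₀ n hn
  rw [hu] at this
  have hp := wseq_pos hv n
  calc wseq v (n+k) = (wseq v (n+k) / wseq v n) * wseq v n := by field_simp
    _ ≤ c * wseq v n := mul_le_mul_of_nonneg_right this.le hp.le

lemma sum_wseq_bound {v : ℂ → ℝ} (hv : IsNormalWeight v) :
    ∃ C : ℝ, 0 < C ∧ ∀ m : ℕ,
      (∑ n ∈ Finset.range (m+1), wseq v m / wseq v n) ≤ C := by
  obtain ⟨k, c, N₀, hk1, hc0, hc1, hgeom⟩ := wseq_geom hv
  set a : ℕ → ℝ := fun m => ∑ n ∈ Finset.range (m+1), wseq v m / wseq v n with ha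
  have ha_nonneg : ∀ m, 0 ≤ a m := by
    intro m
    exact Finset.sum_nonneg fun n _ => div_nonneg (wseq_pos hv m).le (wseq_pos hv n).le
  have hterm : ∀ m n : ℕ, n ≤ m → wseq v m / wseq v n ≤ 1 := fun m n h =>
    div_le_one_of_le₀ (wseq_anti hv h) (wseq_pos hv n).le
  have hkey : ∀ m, N₀ ≤ m → a (m+k) ≤ c * a m + k := by
    intro m hm
    have hsplit : a (m+k) = (∑ n ∈ Finset.range (m+1), wseq v (m+k) / wseq v n)
        + ∑ n ∈ Finset.Ico (m+1) (m+k+1), wseq v (m+k) / wseq v n := by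
      rw [ha]
      simp only [Finset.range_eq_Ico]
      rw [← Finset.sum_Ico_consecutive _ (Nat.zero_le (m+1)) (by omega : m+1 ≤ m+k+1)]
    rw [hsplit]
    have h1 : (∑ n ∈ Finset.range (m+1), wseq v (m+k) / wseq v n) ≤ c * a m := by
      rw [ha, Finset.mul_sum]
      refine Finset.sum_le_sum ?_
      intro n _
      rw [div_le_iff₀ (wseq_pos hv n), mul_assoc, div_mul_cancel₀ _ (wseq_pos hv n).ne']
      exact hgeom m hm
    have h2 : (∑ n ∈ Finset.Ico (m+1) (m+k+1), wseq v (m+k) / wseq v n) ≤ k := by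
      have := Finset.sum_le_card_nsmul (Finset.Ico (m+1) (m+k+1))
        (fun n => wseq v (m+k) / wseq v n) 1 ?_
      · simpa [Nat.card_Ico] using this
      · intro n hn
        rw [Finset.mem_Ico] at hn
        exact hterm (m+k) n (by omega)
    linarith
  set A := (∑ j ∈ Finset.range (N₀+k), a j) + 1 with hA
  have hA1 : 1 ≤ A := by
    rw [hA]
    have : 0 ≤ ∑ j ∈ Finset.range (N₀+k), a j :=
      Finset.sum_nonneg fun j _ => ha_nonneg j
    linarith
  have hAj : ∀ j, j < N₀+k → a j ≤ A := by
    intro j hj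
    rw [hA]
    have := Finset.single_le_sum (f := a) (fun i _ => ha_nonneg i)
      (Finset.mem_range.2 hj)
    linarith
  have h1c : 0 < 1 - c := by linarith
  have hbnd : ∀ m, a m ≤ A + k/(1-c) := by
    intro m
    induction m using Nat.strong_induction_on with
    | _ m ih =>
      rcases lt_or_ge m (N₀+k) with h | h
      · exact le_trans (hAj m h) (le_add_of_nonneg_right (by positivity))
      · have hm : m = (m-k)+k := by omega
        have hge : N₀ ≤ m-k := by omega
        have hlt : m-k < m := by omega
        have := hkey (m-k) hge
        rw [← hm] at this
        have hih := ih (m-k) hlt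
        have e : c * (A + (k:ℝ)/(1-c)) + k = c*A + (k:ℝ)/(1-c) := by
          field_simp; ring
        have hcA : c * A ≤ A := by nlinarith
        calc a m ≤ c * a (m-k) + k := this
          _ ≤ c * (A + (k:ℝ)/(1-c)) + k := by nlinarith
          _ = c*A + (k:ℝ)/(1-c) := e
          _ ≤ A + (k:ℝ)/(1-c) := by linarith
  refine ⟨A + k/(1-c), ?_, hbnd⟩
  have : 0 ≤ (k:ℝ)/(1-c) := by positivity
  linarith

lemma vr_doubling {v : ℂ → ℝ} (hv : IsNormalWeight v) :
    ∃ M₁ : ℝ, 1 ≤ M₁ ∧ ∀ d : ℝ, 0 < d → d ≤ 1 → vr v (1-d) ≤ M₁ * vr v (1-d/2) := by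
  obtain ⟨M, hM1, hMstep⟩ := wseq_step hv
  refine ⟨M*M, by nlinarith, ?_⟩
  intro d hd0 hd1
  obtain ⟨N, hN1, hN2⟩ := exists_dyadic hd0 hd1
  have h1 : vr v (1-d) ≤ wseq v N :=
    vr_anti hv dyadic_radius_mem.1 (by linarith) (by linarith)
  have h2 : wseq v (N+2) ≤ vr v (1-d/2) := by
    refine vr_anti hv (by linarith) ?_ dyadic_radius_mem.2
    have hc : (-((N+2:ℕ):ℤ)) = (-(N:ℤ)-1) + (-1) := by push_cast; ring
    have : (2:ℝ)^(-((N+2:ℕ):ℤ)) ≤ d/2 := by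
      rw [hc, zpow_add₀ (two_ne_zero)]
      have h12 : (2:ℝ)^(-1:ℤ) = 1/2 := by norm_num
      rw [h12]
      nlinarith
    linarith
  have hw : wseq v N ≤ M*M * wseq v (N+2) := by
    have a := hMstep N
    have b := hMstep (N+1)
    have hp1 := wseq_pos hv (N+1)
    have hp2 := wseq_pos hv (N+2)
    calc wseq v N ≤ M * wseq v (N+1) := a
      _ ≤ M * (M * wseq v (N+2)) := by nlinarith
      _ = M*M*wseq v (N+2) := by ring
  have hpos2 : 0 < vr v (1-d/2) := vr_pos hv (by linarith) (by linarith)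
  calc vr v (1-d) ≤ wseq v N := h1
    _ ≤ M*M*wseq v (N+2) := hw
    _ ≤ M*M*vr v (1-d/2) := by nlinarith

lemma vr_inv_continuousOn {v : ℂ → ℝ} (hv : IsNormalWeight v) :
    ContinuousOn (fun s : ℝ => (vr v s * (1 - s))⁻¹) (Set.Ico (0:ℝ) 1) := by
  apply ContinuousOn.inv₀
  · refine ContinuousOn.mul ?_ ((continuous_const.sub continuous_id).continuousOn)
    exact hv.1.1.comp Complex.continuous_ofReal.continuousOn
      (fun s hs => ofReal_mem_uDisc hs.1 hs.2)
  · intro s hs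
    exact (mul_pos (vr_pos hv hs.1 hs.2) (by linarith [hs.2])).ne'

lemma vr_inv_intervalIntegrable {v : ℂ → ℝ} (hv : IsNormalWeight v) {a b : ℝ}
    (ha : 0 ≤ a) (hb : b < 1) (hab : a ≤ b) :
    IntervalIntegrable (fun s : ℝ => (vr v s * (1 - s))⁻¹) MeasureTheory.volume a b := by
  refine ((vr_inv_continuousOn hv).mono ?_).intervalIntegrable
  rw [Set.uIcc_of_le hab]
  intro s hs
  exact ⟨le_trans ha hs.1, lt_of_le_of_lt hs.2 hb⟩

lemma integral_blocks {v : ℂ → ℝ} (hv : IsNormalWeight v) (N : ℕ) :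
    (∫ s in (0:ℝ)..(1 - (2:ℝ)^(-(N:ℤ))), (vr v s * (1 - s))⁻¹)
      ≤ ∑ n ∈ Finset.range N, (wseq v (n+1))⁻¹ := by
  induction N with
  | zero => simp
  | succ N ih =>
    have hr0 : (0:ℝ) ≤ 1 - (2:ℝ)^(-(N:ℤ)) := dyadic_radius_mem.1
    have hr1 : 1 - (2:ℝ)^(-(N:ℤ)) < 1 := dyadic_radius_mem.2
    have hr0' : (0:ℝ) ≤ 1 - (2:ℝ)^(-((N+1:ℕ):ℤ)) := dyadic_radius_mem.1
    have hr1' : 1 - (2:ℝ)^(-((N+1:ℕ):ℤ)) < 1 := dyadic_radius_mem.2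
    have hle : 1 - (2:ℝ)^(-(N:ℤ)) ≤ 1 - (2:ℝ)^(-((N+1:ℕ):ℤ)) := by
      have : (2:ℝ)^(-((N+1:ℕ):ℤ)) ≤ (2:ℝ)^(-(N:ℤ)) :=
        zpow_le_zpow_right₀ one_le_two (by push_cast; omega)
      linarith
    have hint1 := vr_inv_intervalIntegrable hv le_rfl hr1 hr0
    have hint2 := vr_inv_intervalIntegrable hv hr0 hr1' hle
    rw [← intervalIntegral.integral_add_adjacent_intervals hint1 hint2]
    rw [Finset.sum_range_succ]
    refine add_le_add ih ?_
    -- bound the block integral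
    have hgap : (1 - (2:ℝ)^(-((N+1:ℕ):ℤ))) - (1 - (2:ℝ)^(-(N:ℤ))) = (2:ℝ)^(-(N:ℤ)-1) := by
      have h1 : (2:ℝ)^(-(N:ℤ)) = (2:ℝ)^(-(N:ℤ)-1) * 2 := by
        rw [← zpow_add_one₀ (two_ne_zero)]; ring_nf
      have h2 : (2:ℝ)^(-((N+1:ℕ):ℤ)) = (2:ℝ)^(-(N:ℤ)-1) := by
        congr 1; push_cast; ring
      rw [h1, h2]; ring
    have hgap0 : (0:ℝ) < (2:ℝ)^(-(N:ℤ)-1) := zpow_pos two_pos _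
    have hwp : 0 < wseq v (N+1) := wseq_pos hv (N+1)
    have hbd : ∀ s ∈ Set.uIoc (1 - (2:ℝ)^(-(N:ℤ))) (1 - (2:ℝ)^(-((N+1:ℕ):ℤ))),
        ‖(vr v s * (1 - s))⁻¹‖ ≤ (wseq v (N+1) * (2:ℝ)^(-(N:ℤ)-1))⁻¹ := by
      intro s hs
      rw [Set.uIoc_of_le hle] at hs
      have hs0 : 0 ≤ s := le_trans hr0 hs.1.le
      have hs1 : s < 1 := lt_of_le_of_lt hs.2 hr1'
      have hv1 : wseq v (N+1) ≤ vr v s := vr_anti hv hs0 hs.2 hr1'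
      have hv2 : (2:ℝ)^(-(N:ℤ)-1) ≤ 1 - s := by
        have h2 : (2:ℝ)^(-((N+1:ℕ):ℤ)) = (2:ℝ)^(-(N:ℤ)-1) := by
          congr 1; push_cast; ring
        rw [← h2]; linarith [hs.2]
      have hvs : 0 < vr v s := vr_pos hv hs0 hs1
      have hprod : 0 < vr v s * (1 - s) := mul_pos hvs (by linarith)
      rw [Real.norm_eq_abs, _root_.abs_of_nonneg (inv_nonneg.2 hprod.le)]
      refine inv_anti₀ (by positivity) ?_
      exact mul_le_mul hv1 hv2 hgap0.le hvs.le
    have := intervalIntegral.norm_integral_le_of_norm_le_const hbd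
    rw [hgap] at this
    have habs : |(2:ℝ)^(-(N:ℤ)-1)| = (2:ℝ)^(-(N:ℤ)-1) := abs_of_pos hgap0
    rw [habs] at this
    have heq : (wseq v (N+1) * (2:ℝ)^(-(N:ℤ)-1))⁻¹ * (2:ℝ)^(-(N:ℤ)-1)
        = (wseq v (N+1))⁻¹ := by
      field_simp
    rw [heq] at this
    calc (∫ s in (1 - (2:ℝ)^(-(N:ℤ)))..(1 - (2:ℝ)^(-((N+1:ℕ):ℤ))), (vr v s * (1-s))⁻¹)
        ≤ ‖∫ s in (1 - (2:ℝ)^(-(N:ℤ)))..(1 - (2:ℝ)^(-((N+1:ℕ):ℤ))), (vr v s * (1-s))⁻¹‖ :=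
          le_abs_self _
      _ ≤ (wseq v (N+1))⁻¹ := this

lemma weight_integral_bound {v : ℂ → ℝ} (hv : IsNormalWeight v) :
    ∃ Cv : ℝ, 0 < Cv ∧ ∀ ρ : ℝ, 1/2 ≤ ρ → ρ < 1 →
      vr v ρ * ∫ t in (0:ℝ)..1, (vr v (t*ρ) * (1 - t*ρ))⁻¹ ≤ Cv := by
  obtain ⟨M, hM1, hMstep⟩ := wseq_step hv
  obtain ⟨Ca, hCa0, hCa⟩ := sum_wseq_bound hv
  refine ⟨2*M*Ca, by nlinarith, ?_⟩
  intro ρ hρhalf hρ1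
  have hρ0 : 0 < ρ := by linarith
  have hsub : (∫ t in (0:ℝ)..1, (vr v (t*ρ) * (1 - t*ρ))⁻¹)
      = ρ⁻¹ * ∫ s in (0:ℝ)..ρ, (vr v s * (1-s))⁻¹ := by
    have := intervalIntegral.integral_comp_mul_right (a := (0:ℝ)) (b := 1)
      (fun s => (vr v s * (1-s))⁻¹) hρ0.ne'
    simpa [smul_eq_mul] using this
  obtain ⟨N, hN1, hN2⟩ := exists_dyadic (show (0:ℝ) < 1 - ρ by linarith)
    (by linarith)
  have hcast : (2:ℝ)^(-((N+1:ℕ):ℤ)) = (2:ℝ)^(-(N:ℤ)-1) := by congr 1; push_cast; ring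
  have hρleft : 1 - (2:ℝ)^(-(N:ℤ)) ≤ ρ := by linarith
  have hρright : ρ ≤ 1 - (2:ℝ)^(-((N+1:ℕ):ℤ)) := by rw [hcast]; linarith
  have hr1' : 1 - (2:ℝ)^(-((N+1:ℕ):ℤ)) < 1 := dyadic_radius_mem.2
  have hv1 : vr v ρ ≤ wseq v N := vr_anti hv dyadic_radius_mem.1 hρleft hρ1
  have hS0 : 0 ≤ ∫ s in (0:ℝ)..ρ, (vr v s * (1-s))⁻¹ := by
    refine intervalIntegral.integral_nonneg hρ0.le ?_
    intro s hs
    have : 0 < vr v s * (1 - s) :=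
      mul_pos (vr_pos hv hs.1 (lt_of_le_of_lt hs.2 hρ1)) (by linarith [lt_of_le_of_lt hs.2 hρ1])
    positivity
  have hintρ : (∫ s in (0:ℝ)..ρ, (vr v s * (1-s))⁻¹)
      ≤ ∑ n ∈ Finset.range (N+1), (wseq v (n+1))⁻¹ := by
    have hsplit := intervalIntegral.integral_add_adjacent_intervals
      (vr_inv_intervalIntegrable hv le_rfl hρ1 hρ0.le)
      (vr_inv_intervalIntegrable hv hρ0.le hr1' hρright)
    have hrest : 0 ≤ ∫ s in ρ..(1 - (2:ℝ)^(-((N+1:ℕ):ℤ))), (vr v s * (1-s))⁻¹ := by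
      refine intervalIntegral.integral_nonneg hρright ?_
      intro s hs
      have hs1 : s < 1 := lt_of_le_of_lt hs.2 hr1'
      have hs0 : 0 ≤ s := le_trans hρ0.le hs.1
      have : 0 < vr v s * (1 - s) := mul_pos (vr_pos hv hs0 hs1) (by linarith)
      positivity
    have := integral_blocks hv (N+1)
    linarith
  rw [hsub]
  have hρinv : ρ⁻¹ ≤ 2 := by
    rw [inv_le_comm₀ hρ0 (by norm_num)]
    linarith
  have hsum2 : wseq v N * (∑ n ∈ Finset.range (N+1), (wseq v (n+1))⁻¹) ≤ M * Ca := by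
    have hstep : wseq v N ≤ M * wseq v (N+1) := hMstep N
    have hsumpos : 0 ≤ ∑ n ∈ Finset.range (N+1), (wseq v (n+1))⁻¹ :=
      Finset.sum_nonneg fun n _ => (inv_pos.2 (wseq_pos hv (n+1))).le
    have h2 : wseq v (N+1) * (∑ n ∈ Finset.range (N+1), (wseq v (n+1))⁻¹) ≤ Ca := by
      rw [Finset.mul_sum]
      have hre : ∀ n, wseq v (N+1) * (wseq v (n+1))⁻¹ = wseq v (N+1) / wseq v (n+1) :=
        fun n => (div_eq_mul_inv _ _).symm
      calc (∑ n ∈ Finset.range (N+1), wseq v (N+1) * (wseq v (n+1))⁻¹)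
          = ∑ n ∈ Finset.range (N+1), wseq v (N+1) / wseq v (n+1) := by
            refine Finset.sum_congr rfl fun n _ => hre n
        _ ≤ ∑ j ∈ Finset.range (N+2), wseq v (N+1) / wseq v j := by
            rw [Finset.sum_range_succ' (fun j => wseq v (N+1) / wseq v j) (N+1)]
            have : 0 ≤ wseq v (N+1) / wseq v 0 :=
              div_nonneg (wseq_pos hv (N+1)).le (wseq_pos hv 0).le
            linarith
        _ ≤ Ca := hCa (N+1)
    calc wseq v N * (∑ n ∈ Finset.range (N+1), (wseq v (n+1))⁻¹)
        ≤ (M * wseq v (N+1)) * (∑ n ∈ Finset.range (N+1), (wseq v (n+1))⁻¹) :=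
          mul_le_mul_of_nonneg_right hstep hsumpos
      _ = M * (wseq v (N+1) * (∑ n ∈ Finset.range (N+1), (wseq v (n+1))⁻¹)) := by ring
      _ ≤ M * Ca := by nlinarith
  have hvρ0 : 0 ≤ vr v ρ := (vr_pos hv (by linarith) hρ1).le
  calc vr v ρ * (ρ⁻¹ * ∫ s in (0:ℝ)..ρ, (vr v s * (1-s))⁻¹)
      ≤ vr v ρ * (2 * ∑ n ∈ Finset.range (N+1), (wseq v (n+1))⁻¹) := by
        refine mul_le_mul_of_nonneg_left ?_ hvρ0
        have h1 : ρ⁻¹ * (∫ s in (0:ℝ)..ρ, (vr v s * (1-s))⁻¹)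
            ≤ 2 * (∫ s in (0:ℝ)..ρ, (vr v s * (1-s))⁻¹) :=
          mul_le_mul_of_nonneg_right hρinv hS0
        have h2 : 2 * (∫ s in (0:ℝ)..ρ, (vr v s * (1-s))⁻¹)
            ≤ 2 * ∑ n ∈ Finset.range (N+1), (wseq v (n+1))⁻¹ := by linarith
        linarith
    _ = 2 * (vr v ρ * ∑ n ∈ Finset.range (N+1), (wseq v (n+1))⁻¹) := by ring
    _ ≤ 2 * (wseq v N * ∑ n ∈ Finset.range (N+1), (wseq v (n+1))⁻¹) := by
        have hsumpos : 0 ≤ ∑ n ∈ Finset.range (N+1), (wseq v (n+1))⁻¹ :=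
          Finset.sum_nonneg fun n _ => (inv_pos.2 (wseq_pos hv (n+1))).le
        nlinarith
    _ ≤ 2 * (M * Ca) := by linarith
    _ = 2*M*Ca := by ring

lemma v_radial {v : ℂ → ℝ} (hv : IsNormalWeight v) {z : ℂ} (hz : z ∈ uDisc) :
    v z = vr v (‖z‖) := hv.2.1 z hz

lemma cauchy_vanish {v : ℂ → ℝ} (hv : IsNormalWeight v) {u : ℂ → ℂ}
    (hu : DifferentiableOn ℂ u uDisc)
    (hvan : vanishBd (fun z => v z * ‖u z‖)) :
    vanishBd (fun z => v z * ((1 - ‖z‖) * ‖deriv u z‖)) := by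
  obtain ⟨M₁, hM₁1, hM₁⟩ := vr_doubling hv
  intro ε hε
  have hε₁ : 0 < ε / (4 * M₁) := by positivity
  obtain ⟨s₀, hs₀0, hs₀1, hs₀⟩ := hvan _ hε₁
  refine ⟨(2*s₀+1)/3, by linarith, by linarith, ?_⟩
  intro z hz habs
  have hz1 : ‖z‖ < 1 := mem_uDisc.1 hz
  have hz0 : 0 ≤ ‖z‖ := norm_nonneg z
  set δ := (1 - ‖z‖)/2 with hδdef
  have hδ0 : 0 < δ := by rw [hδdef]; linarith
  set P := vr v ((1 + ‖z‖)/2) with hPdef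
  have hP0 : 0 < P := vr_pos hv (by linarith) (by linarith)
  -- closed ball around z lies in the disc
  have hcb : Metric.closedBall z δ ⊆ uDisc := by
    intro ζ hζ
    rw [Metric.mem_closedBall, Complex.dist_eq] at hζ
    rw [mem_uDisc]
    calc ‖ζ‖ = ‖ζ - z + z‖ := by ring_nf
      _ ≤ ‖ζ - z‖ + ‖z‖ := norm_add_le _ _
      _ ≤ δ + ‖z‖ := by linarith
      _ < 1 := by rw [hδdef]; linarith
  -- sup bound on the sphere
  have hkey : ∀ ζ ∈ Metric.sphere z δ, ‖u ζ‖ ≤ ε/(4*M₁) / P := by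
    intro ζ hζ
    rw [Metric.mem_sphere, Complex.dist_eq] at hζ
    have hζD : ζ ∈ uDisc := hcb (by rw [Metric.mem_closedBall, Complex.dist_eq, hζ])
    have hζu : ‖ζ‖ ≤ (1 + ‖z‖)/2 := by
      calc ‖ζ‖ = ‖ζ - z + z‖ := by ring_nf
        _ ≤ ‖ζ - z‖ + ‖z‖ := norm_add_le _ _
        _ = δ + ‖z‖ := by rw [hζ]
        _ = (1 + ‖z‖)/2 := by rw [hδdef]; ring
    have hζl : s₀ < ‖ζ‖ := by
      have : ‖z‖ ≤ ‖ζ - z‖ + ‖ζ‖ := by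
        calc ‖z‖ = ‖z - ζ + ζ‖ := by ring_nf
          _ ≤ ‖z - ζ‖ + ‖ζ‖ := norm_add_le _ _
          _ = ‖ζ - z‖ + ‖ζ‖ := by rw [norm_sub_rev]
      rw [hζ] at this
      rw [hδdef] at this
      linarith
    have hval : v ζ * ‖u ζ‖ < ε/(4*M₁) := hs₀ ζ hζD hζl
    have hvζ : P ≤ v ζ := by
      rw [v_radial hv hζD]
      exact vr_anti hv (by linarith) hζu (by linarith)
    have hvζ0 : 0 < v ζ := hv.1.2.1 ζ hζD
    have habsu : 0 ≤ ‖u ζ‖ := norm_nonneg _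
    rw [le_div_iff₀ hP0]
    nlinarith
  -- Cauchy estimate
  have hdcc : DiffContOnCl ℂ u (Metric.ball z δ) := hu.diffContOnCl_ball hcb
  have hderiv := Complex.norm_deriv_le_of_forall_mem_sphere_norm_le hδ0 hdcc hkey
  -- conclude
  have hd1 : (1 - ‖z‖) * ‖deriv u z‖
      ≤ (1 - ‖z‖) * ((ε/(4*M₁)/P) / δ) := by
    refine mul_le_mul_of_nonneg_left ?_ (by linarith)
    exact hderiv
  have hδeq : (1 - ‖z‖) * ((ε/(4*M₁)/P) / δ) = 2 * (ε/(4*M₁)) / P := by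
    have hne : (1:ℝ) - ‖z‖ ≠ 0 := by linarith
    have hM₁0 : (0:ℝ) < M₁ := by linarith
    rw [hδdef]
    field_simp
  have hdb : vr v (‖z‖) ≤ M₁ * P := by
    have := hM₁ (1 - ‖z‖) (by linarith) (by linarith)
    have e1 : (1:ℝ) - (1 - ‖z‖) = ‖z‖ := by ring
    have e2 : (1:ℝ) - (1 - ‖z‖)/2 = (1 + ‖z‖)/2 := by ring
    rw [e1, e2] at this
    exact this
  have hvz : v z = vr v (‖z‖) := v_radial hv hz
  have hvz0 : 0 ≤ v z := (hv.1.2.1 z hz).le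
  have habsd : 0 ≤ (1 - ‖z‖) * ‖deriv u z‖ := by
    have := norm_nonneg (deriv u z)
    nlinarith
  calc v z * ((1 - ‖z‖) * ‖deriv u z‖)
      ≤ v z * (2 * (ε/(4*M₁)) / P) := by
        refine mul_le_mul_of_nonneg_left ?_ hvz0
        rw [← hδeq]; exact hd1
    _ ≤ (M₁ * P) * (2 * (ε/(4*M₁)) / P) := by
        refine mul_le_mul_of_nonneg_right ?_ (by positivity)
        rw [hvz]; exact hdb
    _ = ε/2 := by field_simp; ring
    _ < ε := by linarith

lemma reconstruct_vanish {v : ℂ → ℝ} (hv : IsNormalWeight v) {h : ℂ → ℂ}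
    (hd : DifferentiableOn ℂ h uDisc)
    (hvan : vanishBd (fun z => v z * ((1 - ‖z‖) * ‖deriv h z‖))) :
    vanishBd (fun z => v z * ‖h z‖) := by
  obtain ⟨Cv, hCv0, hCv⟩ := weight_integral_bound hv
  intro ε hε
  set ε' := ε / (2*(Cv+1)) with hε'def
  have hε' : 0 < ε' := by positivity
  obtain ⟨s₁', h10, h11, h1⟩ := hvan _ hε'
  set s₁ := max ((1+s₁')/2) (1/2) with hs₁def
  have hs₁l : s₁' < s₁ := lt_of_lt_of_le (by linarith) (le_max_left _ _)
  have hs₁0 : 0 < s₁ := lt_of_lt_of_le one_half_pos (le_max_right _ _)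
  have hs₁1 : s₁ < 1 := by
    rw [hs₁def]; apply max_lt <;> [linarith; norm_num]
  have hs₁half : 1/2 ≤ s₁ := le_max_right _ _
  have hsub : Metric.closedBall (0:ℂ) s₁ ⊆ uDisc := by
    intro x hx
    rw [Metric.mem_closedBall, Complex.dist_eq, sub_zero] at hx
    exact mem_uDisc.2 (lt_of_le_of_lt hx hs₁1)
  obtain ⟨B₂, hB₂⟩ := (isCompact_closedBall (0:ℂ) s₁).exists_bound_of_continuousOn
    (hd.continuousOn.mono hsub)
  have hB₂0 : 0 ≤ B₂ :=
    le_trans (norm_nonneg _) (hB₂ 0 (Metric.mem_closedBall_self hs₁0.le))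
  obtain ⟨s₂, h20, h21, h2⟩ := hv.1.2.2 (ε/(2*(B₂+1))) (by positivity)
  refine ⟨max s₁ s₂, le_trans hs₁0.le (le_max_left _ _), max_lt hs₁1 h21, ?_⟩
  intro z hz habs
  have hz1 := mem_uDisc.1 hz
  set ρ := ‖z‖ with hρdef
  have hρs₁ : s₁ < ρ := lt_of_le_of_lt (le_max_left _ _) habs
  have hρs₂ : s₂ < ρ := lt_of_le_of_lt (le_max_right _ _) habs
  have hρ0 : 0 < ρ := lt_trans hs₁0 hρs₁
  have hρ1 : ρ < 1 := hz1
  set t₁ := s₁ / ρ with ht₁def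
  have ht₁0 : 0 < t₁ := div_pos hs₁0 hρ0
  have ht₁1 : t₁ < 1 := (div_lt_one hρ0).2 hρs₁
  have hmemt : ∀ t : ℝ, 0 ≤ t → t ≤ 1 → (t:ℂ)*z ∈ uDisc :=
    fun t ha hb => smul_mem_uDisc ha hb hz
  have habs_t : ∀ t : ℝ, 0 ≤ t → ‖(t:ℂ)*z‖ = t * ρ := by
    intro t ht
    rw [norm_mul, Complex.norm_real, Real.norm_eq_abs, _root_.abs_of_nonneg ht, hρdef]
  -- FTC along the radius from t₁ to 1
  have hFTC : ∀ t ∈ Set.uIcc t₁ 1, HasDerivAt (fun t:ℝ => h ((t:ℂ)*z))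
      (z • deriv h ((t:ℂ)*z)) t := by
    intro t ht
    rw [Set.uIcc_of_le ht₁1.le] at ht
    have hm := hmemt t (le_trans ht₁0.le ht.1) ht.2
    have hout : HasDerivAt h (deriv h ((t:ℂ)*z)) ((t:ℂ)*z) :=
      (hd.differentiableAt (uDisc_open.mem_nhds hm)).hasDerivAt
    have hin : HasDerivAt (fun t:ℝ => (t:ℂ)*z) z t := by
      simpa using ((hasDerivAt_id ((t:ℝ):ℂ)).mul_const z).comp_ofReal (z := t)
    exact hout.scomp t hin
  have hdcont : ContinuousOn (fun t:ℝ => z • deriv h ((t:ℂ)*z)) (Set.Icc (0:ℝ) 1) := by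
    refine (continuousOn_const (c := z)).smul ?_
    refine (deriv_continuousOn hd).comp
      ((Complex.continuous_ofReal.mul continuous_const).continuousOn) ?_
    intro t ht
    exact hmemt t ht.1 ht.2
  have hIccsub : Set.Icc t₁ (1:ℝ) ⊆ Set.Icc (0:ℝ) 1 :=
    Set.Icc_subset_Icc ht₁0.le le_rfl
  have hint : IntervalIntegrable (fun t:ℝ => z • deriv h ((t:ℂ)*z))
      MeasureTheory.volume t₁ 1 := by
    refine ((hdcont.mono ?_).intervalIntegrable)
    rw [Set.uIcc_of_le ht₁1.le]; exact hIccsub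
  have heq := intervalIntegral.integral_eq_sub_of_hasDerivAt hFTC hint
  have hzeq : h z = h ((t₁:ℂ)*z) + ∫ t in t₁..1, z • deriv h ((t:ℂ)*z) := by
    rw [heq]; simp
  -- bound |h(t₁ z)|
  have hball : ((t₁:ℝ):ℂ)*z ∈ Metric.closedBall (0:ℂ) s₁ := by
    rw [Metric.mem_closedBall, Complex.dist_eq, sub_zero, habs_t t₁ ht₁0.le, ht₁def]
    rw [div_mul_cancel₀ _ hρ0.ne']
  have hB₂z : ‖h ((t₁:ℂ)*z)‖ ≤ B₂ := hB₂ _ hball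
  -- the majorant function
  set gmaj : ℝ → ℝ := fun t => ε' * (vr v (t*ρ) * (1 - t*ρ))⁻¹ with hgmaj
  have hgcont : ContinuousOn gmaj (Set.Icc (0:ℝ) 1) := by
    refine continuousOn_const.mul ?_
    refine (vr_inv_continuousOn hv).comp (continuous_id.mul continuous_const).continuousOn ?_
    intro t ht
    constructor
    · exact mul_nonneg ht.1 hρ0.le
    · calc t * ρ ≤ 1 * ρ := mul_le_mul_of_nonneg_right ht.2 hρ0.le
        _ < 1 := by rw [one_mul]; exact hρ1
  have hgint01 : IntervalIntegrable gmaj MeasureTheory.volume 0 1 := by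
    refine (hgcont.mono ?_).intervalIntegrable
    rw [Set.uIcc_of_le zero_le_one]
  have hgint : IntervalIntegrable gmaj MeasureTheory.volume t₁ 1 := by
    refine ((hgcont.mono hIccsub).mono ?_).intervalIntegrable
    rw [Set.uIcc_of_le ht₁1.le]
  have hg0 : ∀ t ∈ Set.Icc (0:ℝ) 1, 0 ≤ gmaj t := by
    intro t ht
    have hp : 0 < vr v (t*ρ) * (1 - t*ρ) := by
      have h1 : t*ρ < 1 := by
        calc t * ρ ≤ 1 * ρ := mul_le_mul_of_nonneg_right ht.2 hρ0.le
          _ < 1 := by rw [one_mul]; exact hρ1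
      exact mul_pos (vr_pos hv (mul_nonneg ht.1 hρ0.le) h1) (by linarith)
    rw [hgmaj]
    positivity
  -- pointwise bound of the integrand by the majorant on [t₁, 1]
  have hptwise : ∀ t ∈ Set.Icc t₁ (1:ℝ), ‖z • deriv h ((t:ℂ)*z)‖ ≤ gmaj t := by
    intro t ht
    have ht0 : 0 ≤ t := le_trans ht₁0.le ht.1
    have htρ1 : t*ρ < 1 := by
      calc t * ρ ≤ 1 * ρ := mul_le_mul_of_nonneg_right ht.2 hρ0.le
        _ < 1 := by rw [one_mul]; exact hρ1
    have hm := hmemt t ht0 ht.2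
    have htρs : s₁' < t*ρ := by
      have : s₁ ≤ t * ρ := by
        rw [ht₁def] at ht
        have := ht.1
        calc s₁ = (s₁/ρ) * ρ := by field_simp
          _ ≤ t * ρ := mul_le_mul_of_nonneg_right this hρ0.le
      linarith
    have hval : v ((t:ℂ)*z) * ((1 - ‖(t:ℂ)*z‖) * ‖deriv h ((t:ℂ)*z)‖) < ε' :=
      h1 ((t:ℂ)*z) hm (by rw [habs_t t ht0]; exact htρs)
    have hvrad : v ((t:ℂ)*z) = vr v (t*ρ) := by
      rw [v_radial hv hm, habs_t t ht0]
    rw [hvrad, habs_t t ht0] at hval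
    have hvp : 0 < vr v (t*ρ) := vr_pos hv (mul_nonneg ht0 hρ0.le) htρ1
    have h1tp : 0 < 1 - t*ρ := by linarith
    have hA : ‖deriv h ((t:ℂ)*z)‖ ≤ ε' * (vr v (t*ρ) * (1 - t*ρ))⁻¹ := by
      rw [le_mul_inv_iff₀ (by positivity)]
      nlinarith [norm_nonneg (deriv h ((t:ℂ)*z))]
    calc ‖z • deriv h ((t:ℂ)*z)‖ = ‖z‖ * ‖deriv h ((t:ℂ)*z)‖ := by
          rw [smul_eq_mul, norm_mul]
      _ ≤ 1 * ‖deriv h ((t:ℂ)*z)‖ :=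
          mul_le_mul_of_nonneg_right hz1.le (norm_nonneg _)
      _ = ‖deriv h ((t:ℂ)*z)‖ := one_mul _
      _ ≤ gmaj t := hA
  have hnorm1 : ‖∫ t in t₁..1, z • deriv h ((t:ℂ)*z)‖ ≤ ∫ t in t₁..1, gmaj t := by
    calc ‖∫ t in t₁..1, z • deriv h ((t:ℂ)*z)‖
        ≤ ∫ t in t₁..1, ‖z • deriv h ((t:ℂ)*z)‖ :=
          intervalIntegral.norm_integral_le_integral_norm ht₁1.le
      _ ≤ ∫ t in t₁..1, gmaj t := by
          refine intervalIntegral.integral_mono_on ht₁1.le (hint.norm) hgint hptwise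
  have hnorm2 : (∫ t in t₁..1, gmaj t) ≤ ∫ t in (0:ℝ)..1, gmaj t := by
    have hgint0 : IntervalIntegrable gmaj MeasureTheory.volume 0 t₁ := by
      refine ((hgcont.mono (Set.Icc_subset_Icc le_rfl ht₁1.le)).mono ?_).intervalIntegrable
      rw [Set.uIcc_of_le ht₁0.le]
    rw [← intervalIntegral.integral_add_adjacent_intervals hgint0 hgint]
    have : 0 ≤ ∫ t in (0:ℝ)..t₁, gmaj t := by
      refine intervalIntegral.integral_nonneg ht₁0.le ?_
      intro t ht
      exact hg0 t ⟨ht.1, le_trans ht.2 ht₁1.le⟩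
    linarith
  -- assemble
  have hvz0 : 0 ≤ v z := (hv.1.2.1 z hz).le
  have hvz2 : v z < ε/(2*(B₂+1)) := h2 z hz hρs₂
  have hvrρ : v z = vr v ρ := v_radial hv hz
  have hgid : (∫ t in (0:ℝ)..1, gmaj t)
      = ε' * ∫ t in (0:ℝ)..1, (vr v (t*ρ) * (1 - t*ρ))⁻¹ := by
    rw [hgmaj]
    exact intervalIntegral.integral_const_mul _ _
  have hCvρ := hCv ρ (by linarith) hρ1
  have habsh : ‖h z‖ ≤ B₂ + ∫ t in (0:ℝ)..1, gmaj t := by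
    rw [hzeq]
    calc ‖h ((t₁:ℂ)*z) + ∫ t in t₁..1, z • deriv h ((t:ℂ)*z)‖
        ≤ ‖h ((t₁:ℂ)*z)‖ + ‖∫ t in t₁..1, z • deriv h ((t:ℂ)*z)‖ :=
          norm_add_le _ _
      _ ≤ B₂ + ∫ t in (0:ℝ)..1, gmaj t := by
          refine add_le_add hB₂z ?_
          exact le_trans hnorm1 hnorm2
  have hint0 : 0 ≤ ∫ t in (0:ℝ)..1, gmaj t := by
    refine intervalIntegral.integral_nonneg zero_le_one ?_
    exact hg0
  calc v z * ‖h z‖ ≤ v z * (B₂ + ∫ t in (0:ℝ)..1, gmaj t) :=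
        mul_le_mul_of_nonneg_left habsh hvz0
    _ = v z * B₂ + v z * (ε' * ∫ t in (0:ℝ)..1, (vr v (t*ρ) * (1 - t*ρ))⁻¹) := by
        rw [hgid]; ring
    _ = v z * B₂ + ε' * (vr v ρ * ∫ t in (0:ℝ)..1, (vr v (t*ρ) * (1 - t*ρ))⁻¹) := by
        rw [hvrρ]; ring
    _ ≤ v z * B₂ + ε' * Cv := by
        refine add_le_add le_rfl (mul_le_mul_of_nonneg_left hCvρ hε'.le)
    _ < ε := by
        have hb : v z * B₂ < ε/2 := by
          have h5 : v z * (B₂ + 1) < ε/(2*(B₂+1)) * (B₂+1) :=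
            mul_lt_mul_of_pos_right hvz2 (by linarith)
          have he : ε/(2*(B₂+1)) * (B₂+1) = ε/2 := by field_simp
          have h6 : v z * (B₂+1) = v z * B₂ + v z := by ring
          linarith
        have hc : ε' * Cv < ε/2 := by
          have he2 : ε' * (Cv+1) = ε/2 := by rw [hε'def]; field_simp
          have h7 : ε' * (Cv+1) = ε' * Cv + ε' := by ring
          linarith
        linarith

end Aux

/-- If `g ∘ φ ∈ H_v^0` (`v` normal), then `T_g^φ(f_r) ∈ H_v^0` for
every `f ∈ H(𝔻)` and `0 < r < 1`; likewise if `g ∘ φ ∈ B_w^0` for any weight `w`, then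
`T_g^φ(f_r) ∈ B_w^0`. -/
theorem genVolterra_dilation_mem_little_spaces
    (φ g : ℂ → ℂ) (hφ : IsSelfMap φ) (hg : DifferentiableOn ℂ g uDisc)
    (v : ℂ → ℝ) (hv : IsNormalWeight v) (w : ℂ → ℝ) (hw : IsWeight w) :
    (memHv0 v (fun z => g (φ z)) →
      ∀ f : ℂ → ℂ, DifferentiableOn ℂ f uDisc → ∀ r : ℝ, 0 < r → r < 1 →
        memHv0 v (genVolterra g φ (dil r f))) ∧
    (memBv0 w (fun z => g (φ z)) →
      ∀ f : ℂ → ℂ, DifferentiableOn ℂ f uDisc → ∀ r : ℝ, 0 < r → r < 1 →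
        memBv0 w (genVolterra g φ (dil r f))) := by
  constructor
  · -- the weighted Banach space case, `v` normal
    intro hmem f hf r hr0 hr1
    set F := dil r f with hFdef
    have hFd : DifferentiableOn ℂ F uDisc := dil_differentiableOn hf hr0 hr1
    obtain ⟨MF, hMF0, hMF⟩ := dil_bound hf.continuousOn hr0 hr1
    set h := genVolterra g φ F with hhdef
    have hhd : DifferentiableOn ℂ h uDisc := genVolterra_differentiableOn hg hφ hFd
    have hud : DifferentiableOn ℂ (fun z => g (φ z)) uDisc := fun z hz =>
      ((hasDerivAt_comp_selfmap hg hφ hz).differentiableAt).differentiableWithinAt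
    have hu_van : vanishBd (fun z => v z * ((1 - ‖z‖) *
        ‖deriv (fun z => g (φ z)) z‖)) :=
      cauchy_vanish hv hud hmem.2
    have hh_van : vanishBd (fun z => v z * ((1 - ‖z‖) *
        ‖deriv h z‖)) := by
      intro ε hε
      have hε2 : 0 < ε/(MF+1) := by positivity
      obtain ⟨s, hs0, hs1, hs⟩ := hu_van _ hε2
      refine ⟨s, hs0, hs1, ?_⟩
      intro z hz habs
      have hkey : v z * ((1 - ‖z‖) *
          ‖deriv (fun z => g (φ z)) z‖) < ε/(MF+1) := hs z hz habs
      have hdh : deriv h z = (F (φ z) * deriv g (φ z)) * deriv φ z :=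
        deriv_genVolterra hg hφ hFd hz
      have hdu : deriv (fun z => g (φ z)) z = deriv g (φ z) * deriv φ z :=
        deriv_comp_selfmap hg hφ hz
      have habs_eq : ‖deriv h z‖ = ‖F (φ z)‖ *
          ‖deriv (fun z => g (φ z)) z‖ := by
        rw [hdh, hdu, norm_mul, norm_mul, norm_mul]; ring
      have hFb : ‖F (φ z)‖ ≤ MF := hMF _ (hφ.2 hz)
      have hvz0 : 0 ≤ v z := (hv.1.2.1 z hz).le
      have h1z0 : 0 ≤ 1 - ‖z‖ := by linarith [mem_uDisc.1 hz]
      have hA0 : 0 ≤ ‖deriv (fun z => g (φ z)) z‖ := norm_nonneg _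
      have hT0 : 0 ≤ v z * ((1 - ‖z‖) *
          ‖deriv (fun z => g (φ z)) z‖) := by positivity
      calc v z * ((1 - ‖z‖) * ‖deriv h z‖)
          = ‖F (φ z)‖ * (v z * ((1 - ‖z‖) *
              ‖deriv (fun z => g (φ z)) z‖)) := by rw [habs_eq]; ring
        _ ≤ MF * (ε/(MF+1)) := mul_le_mul hFb hkey.le hT0 hMF0
        _ < ε := by
            have h8 : MF * (ε/(MF+1)) < (MF+1) * (ε/(MF+1)) :=
              mul_lt_mul_of_pos_right (by linarith) hε2
            have he : (MF+1)*(ε/(MF+1)) = ε := by field_simp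
            linarith
    have hvanh : vanishBd (fun z => v z * ‖h z‖) :=
      reconstruct_vanish hv hhd hh_van
    have hcont : ContinuousOn (fun z => v z * ‖h z‖) uDisc :=
      hv.1.1.mul (continuous_norm.comp_continuousOn hhd.continuousOn)
    exact ⟨⟨hhd, bddAbove_image_of_vanishBd hcont hvanh⟩, hvanh⟩
  · -- the Bloch-type space case, `w` an arbitrary weight
    intro hmem f hf r hr0 hr1
    set F := dil r f with hFdef
    have hFd : DifferentiableOn ℂ F uDisc := dil_differentiableOn hf hr0 hr1
    obtain ⟨MF, hMF0, hMF⟩ := dil_bound hf.continuousOn hr0 hr1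
    set h := genVolterra g φ F with hhdef
    have hhd : DifferentiableOn ℂ h uDisc := genVolterra_differentiableOn hg hφ hFd
    have hh_van : vanishBd (fun z => w z * ‖deriv h z‖) := by
      intro ε hε
      have hε2 : 0 < ε/(MF+1) := by positivity
      obtain ⟨s, hs0, hs1, hs⟩ := hmem.2 _ hε2
      refine ⟨s, hs0, hs1, ?_⟩
      intro z hz habs
      have hkey : w z * ‖deriv (fun z => g (φ z)) z‖ < ε/(MF+1) :=
        hs z hz habs
      have hdh : deriv h z = (F (φ z) * deriv g (φ z)) * deriv φ z :=
        deriv_genVolterra hg hφ hFd hz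
      have hdu : deriv (fun z => g (φ z)) z = deriv g (φ z) * deriv φ z :=
        deriv_comp_selfmap hg hφ hz
      have habs_eq : ‖deriv h z‖ = ‖F (φ z)‖ *
          ‖deriv (fun z => g (φ z)) z‖ := by
        rw [hdh, hdu, norm_mul, norm_mul, norm_mul]; ring
      have hFb : ‖F (φ z)‖ ≤ MF := hMF _ (hφ.2 hz)
      have hwz0 : 0 ≤ w z := (hw.2.1 z hz).le
      have hA0 : 0 ≤ ‖deriv (fun z => g (φ z)) z‖ := norm_nonneg _
      have hT0 : 0 ≤ w z * ‖deriv (fun z => g (φ z)) z‖ := by positivity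
      calc w z * ‖deriv h z‖
          = ‖F (φ z)‖ *
              (w z * ‖deriv (fun z => g (φ z)) z‖) := by
            rw [habs_eq]; ring
        _ ≤ MF * (ε/(MF+1)) := mul_le_mul hFb hkey.le hT0 hMF0
        _ < ε := by
            have h8 : MF * (ε/(MF+1)) < (MF+1) * (ε/(MF+1)) :=
              mul_lt_mul_of_pos_right (by linarith) hε2
            have he : (MF+1)*(ε/(MF+1)) = ε := by field_simp
            linarith
    have hcont : ContinuousOn (fun z => w z * ‖deriv h z‖) uDisc :=
      hw.1.mul (continuous_norm.comp_continuousOn (deriv_continuousOn hhd))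
    exact ⟨⟨hhd, bddAbove_image_of_vanishBd hcont hh_van⟩, hh_van⟩
end
end

section
/- Let φ be an analytic selfmap of 𝔻, g ∈ H(𝔻), and let v be a normal weight. If limsup_{|φ(z)|→1} (1−|z|) v(z) |(g∘φ)′(z)| = 0 (interpreted as automatically satisfied when sup_z |φ(z)| < 1), then limsup_{|z|→1} (1−|z|) v(z) |(g∘φ)′(z)| = 0. -/
noncomputable section

open Complex MeasureTheory Metric Set Filter Topology

/-- For a normal weight `v`, if
`limsup_{|φ(z)|→1} (1-|z|) v(z) |(g∘φ)'(z)| = 0` then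
`limsup_{|z|→1} (1-|z|) v(z) |(g∘φ)'(z)| = 0`. -/
theorem limsup_at_boundary_of_limsup_at_phi_boundary
    (φ g : ℂ → ℂ) (hφ : IsSelfMap φ) (hg : DifferentiableOn ℂ g uDisc)
    (v : ℂ → ℝ) (hv : IsNormalWeight v)
    (h : ∀ ε : ℝ, 0 < ε → ∃ s : ℝ, 0 ≤ s ∧ s < 1 ∧ ∀ z ∈ uDisc,
      s < ‖φ z‖ →
        (1 - ‖z‖) * v z * ‖deriv (fun u => g (φ u)) z‖ < ε) :
    ∀ ε : ℝ, 0 < ε → ∃ s : ℝ, 0 ≤ s ∧ s < 1 ∧ ∀ z ∈ uDisc,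
      s < ‖z‖ →
        (1 - ‖z‖) * v z * ‖deriv (fun u => g (φ u)) z‖ < ε := by
  intro ε hε
  obtain ⟨s₀, hs₀0, hs₀1, hs₀⟩ := h ε hε
  -- bound deriv g on the closed ball of radius s₀
  have hK : IsCompact (Metric.closedBall (0 : ℂ) s₀) := isCompact_closedBall _ _
  have hKsub : Metric.closedBall (0 : ℂ) s₀ ⊆ uDisc := by
    intro w hw
    simp only [uDisc, Metric.mem_ball, Metric.mem_closedBall] at *
    linarith
  have hopen : IsOpen uDisc := Metric.isOpen_ball
  have hganal : AnalyticOnNhd ℂ g uDisc := hg.analyticOnNhd hopen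
  have hderivC : ContinuousOn (deriv g) (Metric.closedBall (0 : ℂ) s₀) :=
    (hganal.deriv.continuousOn).mono hKsub
  obtain ⟨C, hC⟩ := hK.exists_bound_of_continuousOn hderivC
  have hC0 : 0 ≤ C := le_trans (norm_nonneg _) (hC 0 (by simpa using hs₀0))
  -- choose s from vanishing of v
  have hvw := hv.1.2.2
  obtain ⟨s, hs0, hs1, hsv⟩ := hvw (ε / (2 * (C + 1))) (by positivity)
  refine ⟨s, hs0, hs1, ?_⟩
  intro z hz hzs
  by_cases hcase : s₀ < ‖φ z‖
  · exact hs₀ z hz hcase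
  push_neg at hcase
  -- now |φ z| ≤ s₀
  have hz1 : ‖z‖ < 1 := by simpa [uDisc, Complex.norm_def] using hz
  have hφz : φ z ∈ uDisc := hφ.2 hz
  have hφdz : DifferentiableAt ℂ φ z := hφ.1.differentiableAt (hopen.mem_nhds hz)
  have hgdz : DifferentiableAt ℂ g (φ z) := hg.differentiableAt (hopen.mem_nhds hφz)
  have hcomp : deriv (fun u => g (φ u)) z = deriv g (φ z) * deriv φ z :=
    deriv_comp z hgdz hφdz
  -- Schwarz-type bound on deriv φ
  have hr : (0 : ℝ) < 1 - ‖z‖ := by linarith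
  have hball : Metric.ball z (1 - ‖z‖) ⊆ uDisc := by
    intro w hw
    simp only [uDisc, Metric.mem_ball] at *
    have : dist w 0 ≤ dist w z + dist z 0 := dist_triangle _ _ _
    simp only [dist_zero_right] at this ⊢
    linarith
  have hmaps : Set.MapsTo φ (Metric.ball z (1 - ‖z‖)) (Metric.ball (φ z) 2) := by
    intro w hw
    have h1 : φ w ∈ uDisc := hφ.2 (hball hw)
    have h2 : ‖φ w‖ < 1 := by simpa [uDisc, Metric.mem_ball] using h1
    have h3 : ‖φ z‖ < 1 := by simpa [uDisc, Metric.mem_ball] using hφz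
    rw [Metric.mem_ball]
    calc dist (φ w) (φ z) ≤ ‖φ w‖ + ‖φ z‖ := by
          simpa [dist_eq_norm] using norm_sub_le (φ w) (φ z)
      _ < 2 := by linarith
  have hschwarz : ‖deriv φ z‖ ≤ 2 / (1 - ‖z‖) :=
    Complex.norm_deriv_le_div_of_mapsTo_ball (hφ.1.mono hball) (hmaps.mono_right Metric.ball_subset_closedBall) hr
  -- assemble
  have hgb : ‖deriv g (φ z)‖ ≤ C := by
    have := hC (φ z) (by simpa [Metric.mem_closedBall, Complex.dist_eq] using hcase)
    simpa using this
  have hvz : 0 < v z := hv.1.2.1 z hz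
  have hvzlt : v z < ε / (2 * (C + 1)) := hsv z hz hzs
  rw [hcomp, norm_mul]
  have hφb : (1 - ‖z‖) * ‖deriv φ z‖ ≤ 2 := by
    have := mul_le_mul_of_nonneg_left hschwarz hr.le
    rw [mul_div_cancel₀ _ hr.ne'] at this
    simpa using this
  have hd1 : 0 ≤ ‖deriv g (φ z)‖ := norm_nonneg _
  have hd2 : 0 ≤ ‖deriv φ z‖ := norm_nonneg _
  have key : (1 - ‖z‖) * v z *
      (‖deriv g (φ z)‖ * ‖deriv φ z‖) ≤ v z * (2 * (C + 1)) := by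
    have h1 : (1 - ‖z‖) * v z *
        (‖deriv g (φ z)‖ * ‖deriv φ z‖)
        = v z * (‖deriv g (φ z)‖ *
          ((1 - ‖z‖) * ‖deriv φ z‖)) := by ring
    rw [h1]
    have h2 : ‖deriv g (φ z)‖ * ((1 - ‖z‖) * ‖deriv φ z‖) ≤
        (C + 1) * 2 := by
      have := mul_le_mul hgb hφb (by positivity) (by linarith)
      nlinarith
    calc v z * (‖deriv g (φ z)‖ * ((1 - ‖z‖) * ‖deriv φ z‖))
        ≤ v z * ((C + 1) * 2) := by
          exact mul_le_mul_of_nonneg_left h2 hvz.le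
      _ = v z * (2 * (C + 1)) := by ring
  have hlt : v z * (2 * (C + 1)) < ε := by
    have h2C : (0 : ℝ) < 2 * (C + 1) := by positivity
    calc v z * (2 * (C + 1)) < (ε / (2 * (C + 1))) * (2 * (C + 1)) := by
          exact mul_lt_mul_of_pos_right hvzlt h2C
      _ = ε := div_mul_cancel₀ ε h2C.ne'
  exact lt_of_le_of_lt key hlt
end
end
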